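/- arXiv:1903.00368 — 3 statements merged into one kernel-verified Lean document; each statement's English description precedes it below -/
import Mathlib

section
/- Decoupling of the zeros of the coupled twist function (Theorem 2.1, first part / Lemma on zeros). There exist ε > 0 and functions ζ_1, …, ζ_M, defined for real γ with 0 < |γ| < ε, such that for every such γ: (i) ζ_1(γ), …, ζ_M(γ) are pairwise distinct, they are exactly the zeros of the coupled twist function φ_γ, and each of them is a simple zero of φ_γ; (ii) there is a constant C > 0 with |ζ_i(γ) − ζ^{(1)}_i| ≤ C|γ| for all i ∈ {1,…,M_1} and |ζ_i(γ) − γ^{−1} − ζ^{(2)}_i| ≤ C|γ| for all i ∈ {M_1+1,…,M}. Moreover, this labelling of the zeros of φ_γ is the unique one satisfying the asymptotics (ii). -/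
open scoped BigOperators Topology
open Filter

/-- The partial-fraction part `χ(w) = Σ_α Σ_{p=0}^{m_α-1} ℓ^α_p (w - z_α)^{-(p+1)}` of a twist
function.  Here the site `α` has multiplicity `m α + 1` (so multiplicities are `≥ 1`) and the
levels are `l α 0, …, l α (m α)`. -/
noncomputable def chiFun {n : ℕ} (z : Fin n → ℂ) (m : Fin n → ℕ)
    (l : Fin n → ℕ → ℂ) (w : ℂ) : ℂ :=
  ∑ a, ∑ p ∈ Finset.range (m a + 1), l a p / (w - z a) ^ (p + 1)

open Polynomial

namespace Decoupling

variable {n₁ n₂ : ℕ} (z1 : Fin n₁ → ℂ) (m1 : Fin n₁ → ℕ) (l1 : Fin n₁ → ℕ → ℂ)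
  (z2 : Fin n₂ → ℂ) (m2 : Fin n₂ → ℕ) (l2 : Fin n₂ → ℕ → ℂ) (linf : ℂ)

noncomputable def Apoly : ℂ[X] := ∏ a, (X - C (z1 a)) ^ (m1 a + 1)

noncomputable def P1poly : ℂ[X] :=
  (∑ a, ∑ p ∈ Finset.range (m1 a + 1), C (l1 a p) * (X - C (z1 a)) ^ (m1 a - p) *
    ∏ b ∈ Finset.univ.erase a, (X - C (z1 b)) ^ (m1 b + 1)) - C linf * Apoly z1 m1

noncomputable def Bpoly (g : ℂ) : ℂ[X] := ∏ a, (C g * (X - C (z2 a)) - 1) ^ (m2 a + 1)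

noncomputable def Rpoly (g : ℂ) : ℂ[X] :=
  ∑ a, ∑ p ∈ Finset.range (m2 a + 1), C (g ^ (p + 1) * l2 a p) *
    (C g * (X - C (z2 a)) - 1) ^ (m2 a - p) *
    ∏ b ∈ Finset.univ.erase a, (C g * (X - C (z2 b)) - 1) ^ (m2 b + 1)

noncomputable def Qpoly (g : ℂ) : ℂ[X] :=
  P1poly z1 m1 l1 linf * Bpoly z2 m2 g + Apoly z1 m1 * Rpoly z2 m2 l2 g

lemma evalA (w : ℂ) : (Apoly z1 m1).eval w = ∏ a, (w - z1 a) ^ (m1 a + 1) := by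
  simp [Apoly, eval_prod]

lemma evalB (g w : ℂ) : (Bpoly z2 m2 g).eval w = ∏ a, (g * (w - z2 a) - 1) ^ (m2 a + 1) := by
  simp [Bpoly, eval_prod]

lemma evalA_ne_zero {w : ℂ} (hw : ∀ a, w ≠ z1 a) : (Apoly z1 m1).eval w ≠ 0 := by
  rw [evalA]
  exact Finset.prod_ne_zero_iff.2 fun a _ => pow_ne_zero _ (sub_ne_zero.2 (hw a))

lemma Bfac {g w : ℂ} (hg : g ≠ 0) (a : Fin n₂) :
    g * (w - z2 a) - 1 = g * (w - g⁻¹ - z2 a) := by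
  field_simp; ring

lemma evalB_ne_zero {g w : ℂ} (hg : g ≠ 0) (hw : ∀ a, w ≠ z2 a + g⁻¹) :
    (Bpoly z2 m2 g).eval w ≠ 0 := by
  rw [evalB]
  refine Finset.prod_ne_zero_iff.2 fun a _ => pow_ne_zero _ ?_
  rw [Bfac z2 hg a]
  refine mul_ne_zero hg ?_
  have : w - (z2 a + g⁻¹) ≠ 0 := sub_ne_zero.2 (hw a)
  intro h; apply this; rw [← h]; ring

lemma A_mul_chi {w : ℂ} (hw : ∀ a, w ≠ z1 a) :
    (Apoly z1 m1).eval w * chiFun z1 m1 l1 w =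
      ∑ a, ∑ p ∈ Finset.range (m1 a + 1), l1 a p * (w - z1 a) ^ (m1 a - p) *
        ∏ b ∈ Finset.univ.erase a, (w - z1 b) ^ (m1 b + 1) := by
  rw [chiFun, Finset.mul_sum]
  refine Finset.sum_congr rfl fun a _ => ?_
  rw [Finset.mul_sum]
  refine Finset.sum_congr rfl fun p hp => ?_
  have hx : (w - z1 a) ≠ 0 := sub_ne_zero.2 (hw a)
  have hA : (Apoly z1 m1).eval w =
      (w - z1 a) ^ (m1 a + 1) * ∏ b ∈ Finset.univ.erase a, (w - z1 b) ^ (m1 b + 1) := by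
    rw [evalA]; exact (Finset.mul_prod_erase _ _ (Finset.mem_univ a)).symm
  have hp' : p ≤ m1 a := by
    have := Finset.mem_range.1 hp; omega
  have hpow : (w - z1 a) ^ (m1 a + 1) = (w - z1 a) ^ (p + 1) * (w - z1 a) ^ (m1 a - p) := by
    rw [← pow_add]; congr 1; omega
  rw [hA, hpow]
  have hxp : (w - z1 a) ^ (p + 1) ≠ 0 := pow_ne_zero _ hx
  field_simp

lemma evalP1 {w : ℂ} (hw : ∀ a, w ≠ z1 a) :
    (P1poly z1 m1 l1 linf).eval w = (Apoly z1 m1).eval w * (chiFun z1 m1 l1 w - linf) := by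
  have h := A_mul_chi z1 m1 l1 hw
  have hsum : (P1poly z1 m1 l1 linf).eval w =
      (∑ a, ∑ p ∈ Finset.range (m1 a + 1), l1 a p * (w - z1 a) ^ (m1 a - p) *
        ∏ b ∈ Finset.univ.erase a, (w - z1 b) ^ (m1 b + 1)) - linf * (Apoly z1 m1).eval w := by
    simp [P1poly, eval_finset_sum, eval_prod]
  rw [hsum, ← h]; ring

lemma B_mul_chi {g w : ℂ} (hg : g ≠ 0) (hw : ∀ a, w ≠ z2 a + g⁻¹) :
    (Bpoly z2 m2 g).eval w * chiFun z2 m2 l2 (w - g⁻¹) = (Rpoly z2 m2 l2 g).eval w := by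
  have hR : (Rpoly z2 m2 l2 g).eval w =
      ∑ a, ∑ p ∈ Finset.range (m2 a + 1), (g ^ (p + 1) * l2 a p) *
        (g * (w - z2 a) - 1) ^ (m2 a - p) *
        ∏ b ∈ Finset.univ.erase a, (g * (w - z2 b) - 1) ^ (m2 b + 1) := by
    simp [Rpoly, eval_finset_sum, eval_prod]
  rw [hR, chiFun, Finset.mul_sum]
  refine Finset.sum_congr rfl fun a _ => ?_
  rw [Finset.mul_sum]
  refine Finset.sum_congr rfl fun p hp => ?_
  have hu : (w - g⁻¹) - z2 a ≠ 0 := by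
    have : w - (z2 a + g⁻¹) ≠ 0 := sub_ne_zero.2 (hw a)
    intro h; apply this; rw [← h]; ring
  have hB : (Bpoly z2 m2 g).eval w =
      (g * (w - z2 a) - 1) ^ (m2 a + 1) *
        ∏ b ∈ Finset.univ.erase a, (g * (w - z2 b) - 1) ^ (m2 b + 1) := by
    rw [evalB]; exact (Finset.mul_prod_erase _ _ (Finset.mem_univ a)).symm
  have hp' : p ≤ m2 a := by
    have := Finset.mem_range.1 hp; omega
  have hfac : g * (w - z2 a) - 1 = g * ((w - g⁻¹) - z2 a) := by
    exact Bfac z2 hg a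
  have hpow : (g * (w - z2 a) - 1) ^ (m2 a + 1) =
      (g * ((w - g⁻¹) - z2 a)) ^ (p + 1) * (g * (w - z2 a) - 1) ^ (m2 a - p) := by
    rw [hfac, ← pow_add]; congr 1; omega
  rw [hB, hpow]
  have hxp : ((w - g⁻¹) - z2 a) ^ (p + 1) ≠ 0 := pow_ne_zero _ hu
  rw [mul_pow, div_eq_mul_inv]
  have hinv : (w - g⁻¹ - z2 a) ^ (p + 1) * ((w - g⁻¹ - z2 a) ^ (p + 1))⁻¹ = 1 :=
    mul_inv_cancel₀ hxp
  linear_combination (g ^ (p + 1) * l2 a p * (g * (w - z2 a) - 1) ^ (m2 a - p) *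
    ∏ b ∈ Finset.univ.erase a, (g * (w - z2 b) - 1) ^ (m2 b + 1)) * hinv

lemma evalQ_eq {g w : ℂ} (hg : g ≠ 0) (hw1 : ∀ a, w ≠ z1 a) (hw2 : ∀ a, w ≠ z2 a + g⁻¹) :
    (Qpoly z1 m1 l1 z2 m2 l2 linf g).eval w =
      (Apoly z1 m1).eval w * (Bpoly z2 m2 g).eval w *
        (chiFun z1 m1 l1 w + chiFun z2 m2 l2 (w - g⁻¹) - linf) := by
  have h2 := B_mul_chi z2 m2 l2 hg hw2
  rw [Qpoly, eval_add, eval_mul, eval_mul, evalP1 z1 m1 l1 linf hw1, ← h2]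
  ring

lemma evalQ_zero (w : ℂ) :
    (Qpoly z1 m1 l1 z2 m2 l2 linf 0).eval w =
      (-1 : ℂ) ^ (∑ a, (m2 a + 1)) * (P1poly z1 m1 l1 linf).eval w := by
  have hB : (Bpoly z2 m2 0).eval w = (-1 : ℂ) ^ (∑ a, (m2 a + 1)) := by
    rw [evalB]
    rw [← Finset.prod_pow_eq_pow_sum]
    exact Finset.prod_congr rfl fun a _ => by norm_num
  have hR : (Rpoly z2 m2 l2 0).eval w = 0 := by
    simp [Rpoly, eval_finset_sum]
  rw [Qpoly, eval_add, eval_mul, eval_mul, hB, hR]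
  ring


lemma coeff_prod'' {ι : Type*} (s : Finset ι) (f : ι → ℂ[X]) (d : ι → ℕ)
    (h : ∀ i ∈ s, (f i).natDegree ≤ d i) :
    (∏ i ∈ s, f i).coeff (∑ i ∈ s, d i) = ∏ i ∈ s, (f i).coeff (d i) := by
  classical
  induction s using Finset.cons_induction with
  | empty => simp
  | cons a s ha ih =>
    rw [Finset.prod_cons, Finset.sum_cons,
      Polynomial.coeff_mul_add_eq_of_natDegree_le (h a (Finset.mem_cons_self a s))
        ((natDegree_prod_le _ _).trans (Finset.sum_le_sum fun i hi => h i (Finset.mem_cons_of_mem hi))),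
      ih fun i hi => h i (Finset.mem_cons_of_mem hi), Finset.prod_cons]

lemma monicA : (Apoly z1 m1).Monic :=
  monic_prod_of_monic _ _ fun a _ => (monic_X_sub_C _).pow _

lemma natDegreeA : (Apoly z1 m1).natDegree = ∑ a, (m1 a + 1) := by
  rw [Apoly, natDegree_prod]
  · exact Finset.sum_congr rfl fun a _ => by simp [natDegree_pow]
  · exact fun a _ => pow_ne_zero _ (X_sub_C_ne_zero _)

lemma natDegree_term1_le (a : Fin n₁) (p : ℕ) :
    (C (l1 a p) * (X - C (z1 a)) ^ (m1 a - p) *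
      ∏ b ∈ Finset.univ.erase a, (X - C (z1 b)) ^ (m1 b + 1)).natDegree ≤
      (m1 a - p) + ∑ b ∈ Finset.univ.erase a, (m1 b + 1) := by
  refine natDegree_mul_le.trans (add_le_add ?_ ?_)
  · refine natDegree_mul_le.trans ?_
    simp [natDegree_pow]
  · refine (natDegree_prod_le _ _).trans ?_
    exact le_of_eq (Finset.sum_congr rfl fun b _ => by simp [natDegree_pow])

lemma natDegreeP1_le : (P1poly z1 m1 l1 linf).natDegree ≤ ∑ a, (m1 a + 1) := by
  refine (natDegree_sub_le _ _).trans (max_le ?_ ?_)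
  · refine Polynomial.natDegree_sum_le_of_forall_le _ _ fun a _ => ?_
    refine Polynomial.natDegree_sum_le_of_forall_le _ _ fun p _ => ?_
    refine (natDegree_term1_le z1 m1 l1 a p).trans ?_
    rw [← Finset.add_sum_erase _ _ (Finset.mem_univ a)]
    omega
  · refine natDegree_mul_le.trans ?_
    simp [natDegreeA]

lemma coeffP1 : (P1poly z1 m1 l1 linf).coeff (∑ a, (m1 a + 1)) = -linf := by
  rw [P1poly, coeff_sub]
  have h1 : (∑ a, ∑ p ∈ Finset.range (m1 a + 1), C (l1 a p) * (X - C (z1 a)) ^ (m1 a - p) *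
      ∏ b ∈ Finset.univ.erase a, (X - C (z1 b)) ^ (m1 b + 1)).coeff (∑ a, (m1 a + 1)) = 0 := by
    rw [finset_sum_coeff]
    refine Finset.sum_eq_zero fun a _ => ?_
    rw [finset_sum_coeff]
    refine Finset.sum_eq_zero fun p _ => ?_
    refine coeff_eq_zero_of_natDegree_lt ((natDegree_term1_le z1 m1 l1 a p).trans_lt ?_)
    rw [← Finset.add_sum_erase _ _ (Finset.mem_univ a)]
    omega
  have h2 : (C linf * Apoly z1 m1).coeff (∑ a, (m1 a + 1)) = linf := by
    rw [coeff_C_mul, ← natDegreeA z1 m1, (monicA z1 m1).coeff_natDegree, mul_one]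
  rw [h1, h2]; ring

lemma natDegree_facB_le (g : ℂ) (a : Fin n₂) :
    (C g * (X - C (z2 a)) - 1).natDegree ≤ 1 := by
  refine (natDegree_sub_le _ _).trans (max_le ?_ ?_)
  · refine natDegree_mul_le.trans ?_
    simp
  · simp

lemma coeff_facB_one (g : ℂ) (a : Fin n₂) :
    (C g * (X - C (z2 a)) - 1).coeff 1 = g := by
  simp [coeff_sub, coeff_C_mul, coeff_one, coeff_C]

lemma natDegree_facB_pow_le (g : ℂ) (a : Fin n₂) (k : ℕ) :
    ((C g * (X - C (z2 a)) - 1) ^ k).natDegree ≤ k := by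
  refine natDegree_pow_le.trans ?_
  have := natDegree_facB_le z2 g a
  calc k * (C g * (X - C (z2 a)) - 1).natDegree ≤ k * 1 := Nat.mul_le_mul_left k this
    _ = k := mul_one k

lemma natDegreeB_le (g : ℂ) : (Bpoly z2 m2 g).natDegree ≤ ∑ a, (m2 a + 1) := by
  rw [Bpoly]
  refine (natDegree_prod_le _ _).trans (Finset.sum_le_sum fun a _ => ?_)
  exact natDegree_facB_pow_le z2 g a _

lemma coeffB (g : ℂ) : (Bpoly z2 m2 g).coeff (∑ a, (m2 a + 1)) = g ^ (∑ a, (m2 a + 1)) := by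
  rw [Bpoly, coeff_prod'' Finset.univ _ (fun a => m2 a + 1)
    (fun a _ => natDegree_facB_pow_le z2 g a _)]
  rw [← Finset.prod_pow_eq_pow_sum]
  refine Finset.prod_congr rfl fun a _ => ?_
  have h := Polynomial.coeff_pow_of_natDegree_le (m := m2 a + 1) (natDegree_facB_le z2 g a)
  rw [mul_one] at h
  rw [h, coeff_facB_one]

lemma natDegree_term2_le (g : ℂ) (a : Fin n₂) (p : ℕ) :
    (C (g ^ (p + 1) * l2 a p) * (C g * (X - C (z2 a)) - 1) ^ (m2 a - p) *
      ∏ b ∈ Finset.univ.erase a, (C g * (X - C (z2 b)) - 1) ^ (m2 b + 1)).natDegree ≤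
      (m2 a - p) + ∑ b ∈ Finset.univ.erase a, (m2 b + 1) := by
  refine natDegree_mul_le.trans (add_le_add ?_ ?_)
  · refine natDegree_mul_le.trans ?_
    simp only [natDegree_C, zero_add]
    exact natDegree_facB_pow_le z2 g a (m2 a - p)
  · exact (natDegree_prod_le _ _).trans (Finset.sum_le_sum fun b _ =>
      natDegree_facB_pow_le z2 g b _)

lemma natDegreeR_le (g : ℂ) : (Rpoly z2 m2 l2 g).natDegree ≤ ∑ a, (m2 a + 1) := by
  refine Polynomial.natDegree_sum_le_of_forall_le _ _ fun a _ => ?_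
  refine Polynomial.natDegree_sum_le_of_forall_le _ _ fun p _ => ?_
  refine (natDegree_term2_le z2 m2 l2 g a p).trans ?_
  rw [← Finset.add_sum_erase _ _ (Finset.mem_univ a)]
  omega

lemma natDegreeQ_le (g : ℂ) :
    (Qpoly z1 m1 l1 z2 m2 l2 linf g).natDegree ≤ (∑ a, (m1 a + 1)) + ∑ a, (m2 a + 1) := by
  refine (natDegree_add_le _ _).trans (max_le ?_ ?_)
  · exact natDegree_mul_le.trans (add_le_add (natDegreeP1_le z1 m1 l1 linf) (natDegreeB_le z2 m2 g))
  · exact natDegree_mul_le.trans (add_le_add (natDegreeA z1 m1).le (natDegreeR_le z2 m2 l2 g))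

lemma coeffQ (g : ℂ) :
    (Qpoly z1 m1 l1 z2 m2 l2 linf g).coeff ((∑ a, (m1 a + 1)) + ∑ a, (m2 a + 1)) =
      -(linf * g ^ (∑ a, (m2 a + 1))) := by
  rw [Qpoly, coeff_add]
  have h1 : (P1poly z1 m1 l1 linf * Bpoly z2 m2 g).coeff ((∑ a, (m1 a + 1)) + ∑ a, (m2 a + 1)) =
      -(linf * g ^ (∑ a, (m2 a + 1))) := by
    rw [Polynomial.coeff_mul_add_eq_of_natDegree_le (natDegreeP1_le z1 m1 l1 linf) (natDegreeB_le z2 m2 g),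
      coeffP1, coeffB]
    ring
  have h2 : (Apoly z1 m1 * Rpoly z2 m2 l2 g).coeff ((∑ a, (m1 a + 1)) + ∑ a, (m2 a + 1)) = 0 := by
    rw [Rpoly, Finset.mul_sum]
    rw [finset_sum_coeff]
    refine Finset.sum_eq_zero fun a _ => ?_
    rw [Finset.mul_sum, finset_sum_coeff]
    refine Finset.sum_eq_zero fun p _ => ?_
    refine coeff_eq_zero_of_natDegree_lt ?_
    refine natDegree_mul_le.trans_lt ?_
    have h3 := natDegree_term2_le z2 m2 l2 g a p
    have h4 : (m2 a + 1) + ∑ b ∈ Finset.univ.erase a, (m2 b + 1) = ∑ a, (m2 a + 1) :=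
      Finset.add_sum_erase Finset.univ (fun b => m2 b + 1) (Finset.mem_univ a)
    have h5 := natDegreeA z1 m1
    omega
  rw [h1, h2, add_zero]


noncomputable def Qfun (g w : ℂ) : ℂ := (Qpoly z1 m1 l1 z2 m2 l2 linf g).eval w

lemma contDiff_Qfun : ContDiff ℂ ⊤ (fun p : ℂ × ℂ => Qfun z1 m1 l1 z2 m2 l2 linf p.1 p.2) := by
  have hQ : (fun p : ℂ × ℂ => Qfun z1 m1 l1 z2 m2 l2 linf p.1 p.2) = fun p : ℂ × ℂ =>
      ((∑ a, ∑ q ∈ Finset.range (m1 a + 1), l1 a q * (p.2 - z1 a) ^ (m1 a - q) *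
        ∏ b ∈ Finset.univ.erase a, (p.2 - z1 b) ^ (m1 b + 1)) -
        linf * ∏ a, (p.2 - z1 a) ^ (m1 a + 1)) *
        ∏ a, (p.1 * (p.2 - z2 a) - 1) ^ (m2 a + 1) +
      (∏ a, (p.2 - z1 a) ^ (m1 a + 1)) *
        ∑ a, ∑ q ∈ Finset.range (m2 a + 1), p.1 ^ (q + 1) * l2 a q *
          (p.1 * (p.2 - z2 a) - 1) ^ (m2 a - q) *
          ∏ b ∈ Finset.univ.erase a, (p.1 * (p.2 - z2 b) - 1) ^ (m2 b + 1) := by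
    funext p
    simp [Qfun, Qpoly, P1poly, Apoly, Bpoly, Rpoly, eval_prod, eval_finset_sum]
  rw [hQ]
  have hfac2 : ∀ a : Fin n₂, ContDiff ℂ ⊤ (fun p : ℂ × ℂ => p.1 * (p.2 - z2 a) - 1) :=
    fun a => (contDiff_fst.mul (contDiff_snd.sub contDiff_const)).sub contDiff_const
  have hA : ContDiff ℂ ⊤ (fun p : ℂ × ℂ => ∏ a, (p.2 - z1 a) ^ (m1 a + 1)) :=
    contDiff_prod fun a _ => (contDiff_snd.sub contDiff_const).pow _
  refine ContDiff.add (ContDiff.mul (ContDiff.sub ?_ (contDiff_const.mul hA))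
      (contDiff_prod fun a _ => (hfac2 a).pow _))
      (hA.mul ?_)
  · refine ContDiff.sum fun a _ => ContDiff.sum fun q _ => ?_
    exact ((contDiff_const.mul ((contDiff_snd.sub contDiff_const).pow _)).mul
      (contDiff_prod fun b _ => (contDiff_snd.sub contDiff_const).pow _))
  · refine ContDiff.sum fun a _ => ContDiff.sum fun q _ => ?_
    exact ((((contDiff_fst.pow _).mul contDiff_const).mul ((hfac2 a).pow _)).mul
      (contDiff_prod fun b _ => (hfac2 b).pow _))

lemma differentiableAt_chiFun {n : ℕ} (z : Fin n → ℂ) (m : Fin n → ℕ) (l : Fin n → ℕ → ℂ)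
    {w : ℂ} (hw : ∀ a, w ≠ z a) : DifferentiableAt ℂ (chiFun z m l) w := by
  show DifferentiableAt ℂ
    (fun w => ∑ a, ∑ p ∈ Finset.range (m a + 1), l a p / (w - z a) ^ (p + 1)) w
  refine DifferentiableAt.fun_sum fun a _ => DifferentiableAt.fun_sum fun p _ => ?_
  exact (differentiableAt_const _).div
    ((differentiableAt_fun_id.sub (differentiableAt_const _)).pow _)
    (pow_ne_zero _ (sub_ne_zero.2 (hw a)))

lemma derivP1 {ζ : ℂ} (hw : ∀ a, ζ ≠ z1 a) (hz : chiFun z1 m1 l1 ζ - linf = 0) :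
    deriv (fun w => (P1poly z1 m1 l1 linf).eval w) ζ =
      (Apoly z1 m1).eval ζ * deriv (fun w => chiFun z1 m1 l1 w - linf) ζ := by
  have hUopen : IsOpen ((Set.range z1)ᶜ : Set ℂ) :=
    (Set.finite_range z1).isClosed.isOpen_compl
  have hmem : ζ ∈ (Set.range z1)ᶜ := by
    simp only [Set.mem_compl_iff, Set.mem_range, not_exists]
    exact fun a h => hw a h.symm
  have heq : (fun w => (P1poly z1 m1 l1 linf).eval w) =ᶠ[𝓝 ζ]
      fun w => (Apoly z1 m1).eval w * (chiFun z1 m1 l1 w - linf) := by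
    refine eventually_of_mem (hUopen.mem_nhds hmem) fun w hw' => ?_
    refine evalP1 z1 m1 l1 linf fun a h => ?_
    exact hw' ⟨a, h.symm⟩
  rw [heq.deriv_eq]
  have hd1 : HasDerivAt (fun w => (Apoly z1 m1).eval w)
      ((Apoly z1 m1).derivative.eval ζ) ζ := Polynomial.hasDerivAt _ _
  have hdchi : DifferentiableAt ℂ (fun w => chiFun z1 m1 l1 w - linf) ζ :=
    (differentiableAt_chiFun z1 m1 l1 hw).sub (differentiableAt_const _)
  have hd2 : HasDerivAt (fun w => chiFun z1 m1 l1 w - linf)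
      (deriv (fun w => chiFun z1 m1 l1 w - linf) ζ) ζ := hdchi.hasDerivAt
  rw [(hd1.fun_mul hd2).deriv, hz]
  ring

lemma core {ζ : ℂ} (hζp : ∀ a, ζ ≠ z1 a) (hζz : chiFun z1 m1 l1 ζ - linf = 0)
    (hζs : deriv (fun w => chiFun z1 m1 l1 w - linf) ζ ≠ 0) :
    ∃ Z : ℂ → ℂ, ∃ C ε₀ : ℝ, 0 < C ∧ 0 < ε₀ ∧ ∀ g : ℂ, ‖g‖ < ε₀ →
      ‖Z g - ζ‖ ≤ C * ‖g‖ ∧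
      (Qpoly z1 m1 l1 z2 m2 l2 linf g).eval (Z g) = 0 ∧
      (g ≠ 0 → (∀ a, Z g ≠ z1 a) → (∀ a, Z g ≠ z2 a + g⁻¹) →
        deriv (fun w => chiFun z1 m1 l1 w + chiFun z2 m2 l2 (w - g⁻¹) - linf) (Z g) ≠ 0) := by
  classical
  set M₂ : ℕ := ∑ a, (m2 a + 1) with hM₂
  set f : ℂ × ℂ → ℂ := fun p => Qfun z1 m1 l1 z2 m2 l2 linf p.1 p.2 with hf
  have cd : ContDiff ℂ ⊤ f := contDiff_Qfun z1 m1 l1 z2 m2 l2 linf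
  set p₀ : ℂ × ℂ := (0, ζ) with hp₀
  -- partial derivative in the second variable
  have hpart : ∀ s : ℂ × ℂ, HasDerivAt (fun w => f (s.1, w))
      (fderiv ℂ f (s.1, s.2) ((0 : ℂ), (1 : ℂ))) s.2 := by
    intro s
    have hdf : HasFDerivAt f (fderiv ℂ f (s.1, s.2)) (s.1, s.2) :=
      ((cd.differentiable (by simp)) (s.1, s.2)).hasFDerivAt
    have hg : HasDerivAt (fun w : ℂ => ((s.1, w) : ℂ × ℂ)) ((0 : ℂ), (1 : ℂ)) s.2 :=
      (hasDerivAt_const _ _).prodMk (hasDerivAt_id _)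
    exact hdf.comp_hasDerivAt s.2 hg
  -- value and derivative at g = 0
  have hq0 : ∀ w, f (0, w) = (-1 : ℂ) ^ M₂ * (P1poly z1 m1 l1 linf).eval w := fun w =>
    evalQ_zero z1 m1 l1 z2 m2 l2 linf w
  have hf00 : f p₀ = 0 := by
    rw [hp₀, hq0 ζ, evalP1 z1 m1 l1 linf hζp, hζz, mul_zero, mul_zero]
  have hd0 : deriv (fun w => f (0, w)) ζ =
      (-1 : ℂ) ^ M₂ * ((Apoly z1 m1).eval ζ * deriv (fun w => chiFun z1 m1 l1 w - linf) ζ) := by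
    have h1 : (fun w => f (0, w)) = fun w => (-1 : ℂ) ^ M₂ * (P1poly z1 m1 l1 linf).eval w :=
      funext hq0
    rw [h1, deriv_const_mul_field, derivP1 z1 m1 l1 linf hζp hζz]
  have hdne : fderiv ℂ f p₀ ((0 : ℂ), (1 : ℂ)) ≠ 0 := by
    have := (hpart p₀).deriv
    rw [hp₀] at this ⊢
    rw [← this, hd0]
    exact mul_ne_zero (pow_ne_zero _ (by norm_num))
      (mul_ne_zero (evalA_ne_zero z1 m1 hζp) hζs)
  set d : ℂ := fderiv ℂ f p₀ ((0 : ℂ), (1 : ℂ)) with hd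
  set aa : ℂ := fderiv ℂ f p₀ ((1 : ℂ), (0 : ℂ)) with haa
  have hdecomp : ∀ x y : ℂ, fderiv ℂ f p₀ (x, y) = x * aa + y * d := by
    intro x y
    have hxy : ((x, y) : ℂ × ℂ) = x • ((1 : ℂ), (0 : ℂ)) + y • ((0 : ℂ), (1 : ℂ)) := by
      simp [Prod.ext_iff]
    rw [hxy, map_add, map_smul, map_smul, smul_eq_mul, smul_eq_mul]
  set Amap : (ℂ × ℂ) →L[ℂ] (ℂ × ℂ) := (ContinuousLinearMap.fst ℂ ℂ ℂ).prod (fderiv ℂ f p₀)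
    with hAmap
  set Bmap : (ℂ × ℂ) →L[ℂ] (ℂ × ℂ) := (ContinuousLinearMap.fst ℂ ℂ ℂ).prod
    (d⁻¹ • (ContinuousLinearMap.snd ℂ ℂ ℂ - aa • ContinuousLinearMap.fst ℂ ℂ ℂ)) with hBmap
  have hBA : Function.LeftInverse Bmap Amap := by
    rintro ⟨x, y⟩
    simp only [hAmap, hBmap, ContinuousLinearMap.prod_apply, ContinuousLinearMap.coe_fst',
      ContinuousLinearMap.smul_apply, ContinuousLinearMap.coe_sub',
      ContinuousLinearMap.coe_snd', Pi.sub_apply, Pi.smul_apply, smul_eq_mul, hdecomp x y]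
    refine Prod.ext rfl ?_
    show d⁻¹ * ((x * aa + y * d) - aa * x) = y
    field_simp
    ring
  have hAB : Function.RightInverse Bmap Amap := by
    rintro ⟨x, y⟩
    simp only [hAmap, hBmap, ContinuousLinearMap.prod_apply, ContinuousLinearMap.coe_fst',
      ContinuousLinearMap.smul_apply, ContinuousLinearMap.coe_sub',
      ContinuousLinearMap.coe_snd', Pi.sub_apply, Pi.smul_apply, smul_eq_mul]
    refine Prod.ext rfl ?_
    show fderiv ℂ f p₀ (x, d⁻¹ * (y - aa * x)) = y
    rw [hdecomp]
    field_simp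
    ring
  set L : (ℂ × ℂ) ≃L[ℂ] (ℂ × ℂ) := ContinuousLinearEquiv.equivOfInverse Amap Bmap hBA hAB
    with hLdef
  have hLcoe : (L : (ℂ × ℂ) →L[ℂ] (ℂ × ℂ)) = Amap := rfl
  set G : ℂ × ℂ → ℂ × ℂ := fun p => (p.1, f p) with hGdef
  have hG : HasStrictFDerivAt G (L : (ℂ × ℂ) →L[ℂ] (ℂ × ℂ)) p₀ := by
    rw [hLcoe, hAmap]
    exact hasStrictFDerivAt_fst.prodMk ((cd.contDiffAt).hasStrictFDerivAt (by simp))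
  have hGp₀ : G p₀ = ((0 : ℂ), (0 : ℂ)) := by
    have : G p₀ = (p₀.1, f p₀) := rfl
    rw [this, hf00, hp₀]
  set V : ℂ × ℂ → ℂ × ℂ := hG.localInverse G _ p₀ with hVdef
  set Z : ℂ → ℂ := fun g => (V (g, 0)).2 with hZdef
  have T : Tendsto (fun g : ℂ => ((g, 0) : ℂ × ℂ)) (𝓝 0) (𝓝 ((0 : ℂ), (0 : ℂ))) :=
    (continuous_id.prodMk continuous_const).tendsto' 0 (0, 0) rfl
  -- right inverse: Z g is a zero
  have hri : ∀ᶠ y in 𝓝 ((0 : ℂ), (0 : ℂ)), G (V y) = y := by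
    have := hG.eventually_right_inverse
    rwa [hGp₀] at this
  have ev1 : ∀ᶠ g : ℂ in 𝓝 0, (V (g, 0)).1 = g ∧ f (V (g, 0)) = 0 := by
    refine (T.eventually hri).mono fun g hgev => ?_
    have h1 := congrArg Prod.fst hgev
    have h2 := congrArg Prod.snd hgev
    exact ⟨h1, h2⟩
  -- Lipschitz bound
  have hV' : HasStrictFDerivAt V ((L.symm : (ℂ × ℂ) →L[ℂ] (ℂ × ℂ))) ((0 : ℂ), (0 : ℂ)) := by
    have := hG.to_localInverse
    rwa [hGp₀] at this
  obtain ⟨c, hc⟩ := hV'.hasFDerivAt.isBigO_sub.bound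
  have hV00 : V ((0 : ℂ), (0 : ℂ)) = p₀ := by
    rw [← hGp₀]
    exact hG.localInverse_apply_image
  have ev2 : ∀ᶠ g : ℂ in 𝓝 0, ‖Z g - ζ‖ ≤ c * ‖g‖ := by
    refine (T.eventually hc).mono fun g hg => ?_
    have h1 : ‖Z g - ζ‖ ≤ ‖V (g, 0) - V ((0 : ℂ), (0 : ℂ))‖ := by
      rw [hV00]
      have : (V (g, 0) - p₀).2 = Z g - ζ := rfl
      rw [← this]
      exact norm_snd_le _
    have h2 : ‖((g, 0) : ℂ × ℂ) - (0, 0)‖ = ‖g‖ := by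
      simp [Prod.norm_def]
    calc ‖Z g - ζ‖ ≤ ‖V (g, 0) - V ((0 : ℂ), (0 : ℂ))‖ := h1
      _ ≤ c * ‖((g, 0) : ℂ × ℂ) - (0, 0)‖ := hg
      _ = c * ‖g‖ := by rw [h2]
  -- local injectivity
  obtain ⟨δ, hδpos, hδ⟩ := Metric.eventually_nhds_iff.1 hG.eventually_left_inverse
  -- nonvanishing of the partial derivative nearby
  have hpd : Continuous (fun s : ℂ × ℂ => fderiv ℂ f s ((0 : ℂ), (1 : ℂ))) :=
    (cd.continuous_fderiv (by simp)).clm_apply continuous_const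
  obtain ⟨δ₂, hδ₂pos, hδ₂⟩ := Metric.eventually_nhds_iff.1
    (hpd.continuousAt.eventually_ne hdne)
  set C : ℝ := max c 1 with hC
  have hCpos : (0 : ℝ) < C := lt_of_lt_of_le one_pos (le_max_right _ _)
  obtain ⟨ε₁, hε₁pos, hε₁⟩ := Metric.eventually_nhds_iff.1 (ev1.and ev2)
  refine ⟨Z, C, min ε₁ (min δ (δ₂ / (C + 1))), hCpos,
    lt_min hε₁pos (lt_min hδpos (div_pos hδ₂pos (by linarith))), ?_⟩
  intro g hg
  have hgε₁ : dist g 0 < ε₁ := by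
    rw [Complex.dist_eq, sub_zero]
    exact hg.trans_le (min_le_left _ _)
  obtain ⟨⟨hVfst, hfV⟩, hlip⟩ := hε₁ hgε₁
  have hQz : (Qpoly z1 m1 l1 z2 m2 l2 linf g).eval (Z g) = 0 := by
    have : f (V (g, 0)) = f (g, Z g) := by
      rw [show ((g, Z g) : ℂ × ℂ) = ((V (g, 0)).1, (V (g, 0)).2) from by rw [hVfst]]
    rw [← this.symm] at hfV
    exact hfV
  have hlip' : ‖Z g - ζ‖ ≤ C * ‖g‖ :=
    hlip.trans (mul_le_mul_of_nonneg_right (le_max_left _ _) (norm_nonneg _))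
  refine ⟨hlip', hQz, ?_⟩
  · -- simplicity
    intro hgne hpole1 hpole2
    have hZd : dist ((g, Z g) : ℂ × ℂ) p₀ < δ₂ := by
      have h3 : ‖g‖ < δ₂ / (C + 1) :=
        hg.trans_le ((min_le_right _ _).trans (min_le_right _ _))
      have h4 : C * (δ₂ / (C + 1)) ≤ δ₂ := by
        rw [mul_div_assoc', div_le_iff₀ (by linarith : (0:ℝ) < C + 1)]
        nlinarith [hδ₂pos.le]
      rw [Prod.dist_eq]
      refine max_lt ?_ ?_
      · rw [Complex.dist_eq, sub_zero]
        have h2 : δ₂ / (C + 1) ≤ δ₂ := by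
          rw [div_le_iff₀ (by linarith : (0:ℝ) < C + 1)]
          nlinarith [hδ₂pos.le]
        exact h3.trans_le h2
      · rw [Complex.dist_eq]
        calc ‖Z g - ζ‖ ≤ C * ‖g‖ := hlip'
          _ < C * (δ₂ / (C + 1)) := mul_lt_mul_of_pos_left h3 hCpos
          _ ≤ δ₂ := h4
    have hpdne : fderiv ℂ f (g, Z g) ((0 : ℂ), (1 : ℂ)) ≠ 0 := hδ₂ hZd
    have hderQ : deriv (fun w => (Qpoly z1 m1 l1 z2 m2 l2 linf g).eval w) (Z g) ≠ 0 := by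
      have h2 : deriv (fun w => f (g, w)) (Z g) = fderiv ℂ f (g, Z g) ((0 : ℂ), (1 : ℂ)) :=
        (hpart (g, Z g)).deriv
      intro h0
      apply hpdne
      rw [← h2]
      exact h0
    set φ : ℂ → ℂ := fun w => chiFun z1 m1 l1 w + chiFun z2 m2 l2 (w - g⁻¹) - linf with hφdef
    have hU : IsOpen ((Set.range z1 ∪ Set.range (fun a => z2 a + g⁻¹))ᶜ : Set ℂ) :=
      ((Set.finite_range z1).union (Set.finite_range _)).isClosed.isOpen_compl
    have hZmem : Z g ∈ (Set.range z1 ∪ Set.range (fun a => z2 a + g⁻¹))ᶜ := by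
      simp only [Set.mem_compl_iff, Set.mem_union, Set.mem_range, not_or, not_exists]
      exact ⟨fun a h => hpole1 a h.symm, fun a h => hpole2 a h.symm⟩
    have heq : (fun w => (Qpoly z1 m1 l1 z2 m2 l2 linf g).eval w) =ᶠ[𝓝 (Z g)]
        fun w => (Apoly z1 m1).eval w * (Bpoly z2 m2 g).eval w * φ w := by
      refine eventually_of_mem (hU.mem_nhds hZmem) fun w hw' => ?_
      simp only [Set.mem_compl_iff, Set.mem_union, Set.mem_range, not_or, not_exists] at hw'
      exact evalQ_eq z1 m1 l1 z2 m2 l2 linf hgne (fun a h => hw'.1 a h.symm)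
        (fun a h => hw'.2 a h.symm)
    have hφZ : φ (Z g) = 0 := by
      have hQe := evalQ_eq z1 m1 l1 z2 m2 l2 linf hgne hpole1 hpole2
      rw [hQz] at hQe
      rcases mul_eq_zero.1 hQe.symm with h | h
      · exact absurd h (mul_ne_zero (evalA_ne_zero z1 m1 hpole1)
          (evalB_ne_zero z2 m2 hgne hpole2))
      · exact h
    have hdphi : DifferentiableAt ℂ φ (Z g) := by
      have d1 := differentiableAt_chiFun z1 m1 l1 hpole1
      have d2 : DifferentiableAt ℂ (fun w => chiFun z2 m2 l2 (w - g⁻¹)) (Z g) := by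
        have hin : ∀ a, Z g - g⁻¹ ≠ z2 a := by
          intro a h
          exact hpole2 a (by rw [← h]; ring)
        exact (differentiableAt_chiFun z2 m2 l2 hin).comp (g := chiFun z2 m2 l2) (f := fun w => w - g⁻¹) (Z g)
          (differentiableAt_fun_id.sub (differentiableAt_const _))
      exact (d1.add d2).sub (differentiableAt_const _)
    have hAB := (Polynomial.hasDerivAt (Apoly z1 m1) (Z g)).fun_mul
      (Polynomial.hasDerivAt (Bpoly z2 m2 g) (Z g))
    have htot := hAB.fun_mul hdphi.hasDerivAt
    intro hds
    apply hderQ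
    rw [heq.deriv_eq, htot.deriv, hφZ, hds]
    ring

lemma exists_pos_le {ι : Type*} [Finite ι] (f : ι → ℝ) (h : ∀ i, 0 < f i) :
    ∃ ε : ℝ, 0 < ε ∧ ∀ i, ε ≤ f i := by
  cases isEmpty_or_nonempty ι
  · exact ⟨1, one_pos, fun i => isEmptyElim i⟩
  · have : Fintype ι := Fintype.ofFinite ι
    refine ⟨Finset.univ.inf' Finset.univ_nonempty f, ?_, fun i => Finset.inf'_le f (Finset.mem_univ i)⟩
    rw [Finset.lt_inf'_iff]
    exact fun i _ => h i

lemma exists_ub {ι : Type*} [Finite ι] (f : ι → ℝ) : ∃ C : ℝ, 1 ≤ C ∧ ∀ i, f i ≤ C := by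
  obtain ⟨M, hM⟩ := Finite.exists_le f
  exact ⟨max 1 M, le_max_left _ _, fun i => (hM i).trans (le_max_right _ _)⟩

lemma tri (a b c : ℂ) : ‖a - c‖ ≤ ‖a - b‖ + ‖b - c‖ := by
  simpa [dist_eq_norm] using dist_triangle a b c

lemma norm_add_ge (a b : ℂ) : ‖a‖ - ‖b‖ ≤ ‖a + b‖ := by
  have h := norm_sub_norm_le a (-b)
  simpa [sub_neg_eq_add] using h

end Decoupling

set_option maxHeartbeats 3000000 in
open Decoupling in
/-- **Decoupling of the zeros of the coupled twist function** (Theorem 2.1, first part).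
Given two twist functions `φ_k = χ_k - ℓ^∞` (`k = 1, 2`) with simple zeros `ζ1, ζ2`, the coupled
twist function `φ_γ(z) = χ₁(z) + χ₂(z - γ⁻¹) - ℓ^∞` has, for all sufficiently small real
`γ ≠ 0`, exactly `M = M₁ + M₂` pairwise distinct simple zeros `ζ i γ`, satisfying
`ζ i γ = ζ1 i + O(γ)` for the first `M₁` and `ζ i γ = γ⁻¹ + ζ2 i + O(γ)` for the last `M₂`;
moreover this labelling of the zeros is the unique one with these asymptotics. -/
theorem decoupling_of_zeros
    {n₁ n₂ M₁ M₂ : ℕ}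
    (z1 : Fin n₁ → ℂ) (m1 : Fin n₁ → ℕ) (l1 : Fin n₁ → ℕ → ℂ)
    (z2 : Fin n₂ → ℂ) (m2 : Fin n₂ → ℕ) (l2 : Fin n₂ → ℕ → ℂ)
    (linf : ℂ) (hlinf : linf ≠ 0)
    (hz1 : Function.Injective z1) (hz2 : Function.Injective z2)
    (hl1 : ∀ a, l1 a (m1 a) ≠ 0) (hl2 : ∀ a, l2 a (m2 a) ≠ 0)
    (hM1 : M₁ = ∑ a, (m1 a + 1)) (hM2 : M₂ = ∑ a, (m2 a + 1))
    (ζ1 : Fin M₁ → ℂ) (ζ2 : Fin M₂ → ℂ)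
    (hζ1inj : Function.Injective ζ1) (hζ2inj : Function.Injective ζ2)
    (hζ1p : ∀ i a, ζ1 i ≠ z1 a) (hζ2p : ∀ j a, ζ2 j ≠ z2 a)
    (hζ1z : ∀ i, chiFun z1 m1 l1 (ζ1 i) - linf = 0)
    (hζ2z : ∀ j, chiFun z2 m2 l2 (ζ2 j) - linf = 0)
    (hζ1s : ∀ i, deriv (fun w => chiFun z1 m1 l1 w - linf) (ζ1 i) ≠ 0)
    (hζ2s : ∀ j, deriv (fun w => chiFun z2 m2 l2 w - linf) (ζ2 j) ≠ 0) :
    ∃ ε > (0 : ℝ), ∃ ζ : Fin M₁ ⊕ Fin M₂ → ℝ → ℂ, ∃ C > (0 : ℝ),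
      (∀ γ : ℝ, 0 < |γ| → |γ| < ε →
        -- (i) the `ζ i γ` are pairwise distinct …
        (Function.Injective fun i => ζ i γ) ∧
        -- … each of them is a simple zero of the coupled twist function `φ_γ` …
        (∀ i, (∀ a, ζ i γ ≠ z1 a) ∧ (∀ a, ζ i γ ≠ z2 a + (γ : ℂ)⁻¹) ∧
          chiFun z1 m1 l1 (ζ i γ) + chiFun z2 m2 l2 (ζ i γ - (γ : ℂ)⁻¹) - linf = 0 ∧
          deriv (fun w => chiFun z1 m1 l1 w + chiFun z2 m2 l2 (w - (γ : ℂ)⁻¹) - linf)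
            (ζ i γ) ≠ 0) ∧
        -- … and they are exactly the zeros of `φ_γ`
        (∀ w : ℂ, (∀ a, w ≠ z1 a) → (∀ a, w ≠ z2 a + (γ : ℂ)⁻¹) →
          chiFun z1 m1 l1 w + chiFun z2 m2 l2 (w - (γ : ℂ)⁻¹) - linf = 0 →
          ∃ i, ζ i γ = w) ∧
        -- (ii) asymptotics as γ → 0
        (∀ i : Fin M₁, ‖ζ (Sum.inl i) γ - ζ1 i‖ ≤ C * |γ|) ∧
        (∀ j : Fin M₂, ‖ζ (Sum.inr j) γ - (γ : ℂ)⁻¹ - ζ2 j‖ ≤ C * |γ|)) ∧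
      -- uniqueness of the labelling satisfying the asymptotics (ii)
      (∀ (ζ' : Fin M₁ ⊕ Fin M₂ → ℝ → ℂ) (C' : ℝ), 0 < C' →
        (∀ γ : ℝ, 0 < |γ| → |γ| < ε →
          (∀ i, chiFun z1 m1 l1 (ζ' i γ)
              + chiFun z2 m2 l2 (ζ' i γ - (γ : ℂ)⁻¹) - linf = 0) ∧
          (∀ i : Fin M₁, ‖ζ' (Sum.inl i) γ - ζ1 i‖ ≤ C' * |γ|) ∧
          (∀ j : Fin M₂, ‖ζ' (Sum.inr j) γ - (γ : ℂ)⁻¹ - ζ2 j‖ ≤ C' * |γ|)) →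
        ∃ ε' > (0 : ℝ), ∀ γ : ℝ, 0 < |γ| → |γ| < ε' → ∀ i, ζ' i γ = ζ i γ) := by
  classical
  -- apply the core lemma to each simple zero of φ₁ and (with the roles of the two
  -- twist functions interchanged) of φ₂
  choose Z1 C1 e1 hC1 he1 h1 using fun i : Fin M₁ =>
    core z1 m1 l1 z2 m2 l2 linf (hζ1p i) (hζ1z i) (hζ1s i)
  choose Z2 C2 e2 hC2 he2 h2 using fun j : Fin M₂ =>
    core z2 m2 l2 z1 m1 l1 linf (hζ2p j) (hζ2z j) (hζ2s j)
  -- global constants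
  obtain ⟨K, hK1, hK⟩ := exists_ub (ι := (Fin M₁ ⊕ Fin M₂) ⊕ (Fin n₁ ⊕ Fin n₂))
    (Sum.elim (Sum.elim (fun i => ‖ζ1 i‖) (fun j => ‖ζ2 j‖))
      (Sum.elim (fun a => ‖z1 a‖) (fun a => ‖z2 a‖)))
  obtain ⟨C, hCge1, hCub⟩ := exists_ub (Sum.elim C1 C2)
  have hC0 : (0 : ℝ) < C := lt_of_lt_of_le one_pos hCge1
  obtain ⟨d0, hd0, hd0le⟩ := exists_pos_le
    (ι := ({p : Fin M₁ × Fin M₁ // p.1 ≠ p.2} ⊕ {p : Fin M₂ × Fin M₂ // p.1 ≠ p.2}) ⊕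
      ((Fin M₁ × Fin n₁) ⊕ (Fin M₂ × Fin n₂)))
    (Sum.elim (Sum.elim (fun p => ‖ζ1 p.1.1 - ζ1 p.1.2‖) (fun p => ‖ζ2 p.1.1 - ζ2 p.1.2‖))
      (Sum.elim (fun q => ‖ζ1 q.1 - z1 q.2‖) (fun q => ‖ζ2 q.1 - z2 q.2‖)))
    (by
      rintro ((⟨⟨i, i'⟩, hne⟩ | ⟨⟨j, j'⟩, hne⟩) | (⟨i, a⟩ | ⟨j, a⟩)) <;>
        simp only [Sum.elim_inl, Sum.elim_inr] <;> rw [norm_pos_iff, sub_ne_zero]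
      · exact fun h => hne (hζ1inj h)
      · exact fun h => hne (hζ2inj h)
      · exact hζ1p i a
      · exact hζ2p j a)
  obtain ⟨ε₁, hε₁, hε₁le⟩ := exists_pos_le e1 he1
  obtain ⟨ε₂, hε₂, hε₂le⟩ := exists_pos_le e2 he2
  set T : ℝ := 2 * K + 2 * C + 2 with hT
  have hTpos : (0 : ℝ) < T := by rw [hT]; linarith
  set ε : ℝ := min (min ε₁ ε₂) (min 1 (min (d0 / (2 * C + 1)) (1 / T))) with hε
  have hεpos : (0 : ℝ) < ε := by
    refine lt_min (lt_min hε₁ hε₂) (lt_min one_pos (lt_min ?_ ?_))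
    · exact div_pos hd0 (by linarith)
    · exact div_pos one_pos hTpos
  -- the labelled family of zeros
  set ζfam : Fin M₁ ⊕ Fin M₂ → ℝ → ℂ := fun k γ =>
    match k with
    | Sum.inl i => Z1 i ((γ : ℝ) : ℂ)
    | Sum.inr j => ((γ : ℝ) : ℂ)⁻¹ + Z2 j (-((γ : ℝ) : ℂ)) with hζfam
  have hmain : ∀ γ : ℝ, 0 < |γ| → |γ| < ε →
      (Function.Injective fun i => ζfam i γ) ∧
      (∀ i, (∀ a, ζfam i γ ≠ z1 a) ∧ (∀ a, ζfam i γ ≠ z2 a + (γ : ℂ)⁻¹) ∧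
        chiFun z1 m1 l1 (ζfam i γ) + chiFun z2 m2 l2 (ζfam i γ - (γ : ℂ)⁻¹) - linf = 0 ∧
        deriv (fun w => chiFun z1 m1 l1 w + chiFun z2 m2 l2 (w - (γ : ℂ)⁻¹) - linf)
          (ζfam i γ) ≠ 0) ∧
      (∀ w : ℂ, (∀ a, w ≠ z1 a) → (∀ a, w ≠ z2 a + (γ : ℂ)⁻¹) →
        chiFun z1 m1 l1 w + chiFun z2 m2 l2 (w - (γ : ℂ)⁻¹) - linf = 0 →
        ∃ i, ζfam i γ = w) ∧
      (∀ i : Fin M₁, ‖ζfam (Sum.inl i) γ - ζ1 i‖ ≤ C * |γ|) ∧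
      (∀ j : Fin M₂, ‖ζfam (Sum.inr j) γ - (γ : ℂ)⁻¹ - ζ2 j‖ ≤ C * |γ|) := by
    intro γ hγ0 hγε
    set g : ℂ := ((γ : ℝ) : ℂ) with hgdef
    have hgnorm : ‖g‖ = |γ| := Complex.norm_real γ
    have hγne : γ ≠ 0 := abs_pos.1 hγ0
    have hgne : g ≠ 0 := Complex.ofReal_ne_zero.2 hγne
    have hγ1 : |γ| < 1 := hγε.trans_le ((min_le_right _ _).trans (min_le_left _ _))
    -- numeric facts
    have hγd0 : (2 * C + 1) * |γ| < d0 := by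
      have h1' : |γ| < d0 / (2 * C + 1) :=
        hγε.trans_le ((min_le_right _ _).trans ((min_le_right _ _).trans (min_le_left _ _)))
      exact (lt_div_iff₀' (by linarith)).1 h1'
    have hCγd0 : C * |γ| < d0 := by nlinarith [abs_nonneg γ]
    have h2Cγd0 : 2 * C * |γ| < d0 := by nlinarith [abs_nonneg γ]
    have hinvγ : T ≤ |γ|⁻¹ := by
      have h1' : |γ| ≤ 1 / T :=
        (hγε.trans_le ((min_le_right _ _).trans ((min_le_right _ _).trans (min_le_right _ _)))).le
      have h2' := one_div_le_one_div_of_le hγ0 h1'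
      rwa [one_div_one_div, one_div] at h2'
    have hCγC : C * |γ| ≤ C := by nlinarith [abs_nonneg γ]
    -- core conclusions at this γ
    have hglt1 : ∀ i : Fin M₁, ‖g‖ < e1 i := by
      intro i
      rw [hgnorm]
      exact hγε.trans_le (((min_le_left _ _).trans (min_le_left _ _)).trans (hε₁le i))
    have hglt2 : ∀ j : Fin M₂, ‖-g‖ < e2 j := by
      intro j
      rw [norm_neg, hgnorm]
      exact hγε.trans_le (((min_le_left _ _).trans (min_le_right _ _)).trans (hε₂le j))
    have H1 := fun i : Fin M₁ => h1 i g (hglt1 i)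
    have H2 := fun j : Fin M₂ => h2 j (-g) (hglt2 j)
    have hb1 : ∀ i, ‖Z1 i g - ζ1 i‖ ≤ C * |γ| := fun i => (H1 i).1.trans
      (by rw [hgnorm]; exact mul_le_mul_of_nonneg_right (hCub (Sum.inl i)) (abs_nonneg γ))
    have hb2 : ∀ j, ‖Z2 j (-g) - ζ2 j‖ ≤ C * |γ| := fun j => (H2 j).1.trans
      (by rw [norm_neg, hgnorm]; exact mul_le_mul_of_nonneg_right (hCub (Sum.inr j)) (abs_nonneg γ))
    -- norm bounds
    have hnZ1 : ∀ i, ‖Z1 i g‖ ≤ K + C := by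
      intro i
      calc ‖Z1 i g‖ ≤ ‖ζ1 i‖ + ‖Z1 i g - ζ1 i‖ := by
            simpa using norm_add_le (ζ1 i) (Z1 i g - ζ1 i)
        _ ≤ K + C := add_le_add (hK (Sum.inl (Sum.inl i))) ((hb1 i).trans hCγC)
    have hnZ2 : ∀ j, ‖Z2 j (-g)‖ ≤ K + C := by
      intro j
      calc ‖Z2 j (-g)‖ ≤ ‖ζ2 j‖ + ‖Z2 j (-g) - ζ2 j‖ := by
            simpa using norm_add_le (ζ2 j) (Z2 j (-g) - ζ2 j)
        _ ≤ K + C := add_le_add (hK (Sum.inl (Sum.inr j))) ((hb2 j).trans hCγC)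
    have hginv : ‖g⁻¹‖ = |γ|⁻¹ := by rw [norm_inv, hgnorm]
    -- pole conditions for the first family
    have hp1a : ∀ i a, Z1 i g ≠ z1 a := by
      intro i a h
      have : ‖ζ1 i - z1 a‖ ≤ C * |γ| := by
        calc ‖ζ1 i - z1 a‖ = ‖ζ1 i - Z1 i g‖ := by rw [h]
          _ = ‖Z1 i g - ζ1 i‖ := by rw [norm_sub_rev]
          _ ≤ C * |γ| := hb1 i
      exact absurd this (not_le.2 (lt_of_lt_of_le hCγd0
        (hd0le (Sum.inr (Sum.inl (i, a))))))
    have hbig : K + C + 1 ≤ |γ|⁻¹ - (K + C) := by rw [hT] at hinvγ; linarith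
    have hp1b : ∀ i a, Z1 i g ≠ z2 a + g⁻¹ := by
      intro i a h
      have h2' : ‖z2 a + g⁻¹‖ ≥ |γ|⁻¹ - K := by
        calc ‖z2 a + g⁻¹‖ = ‖g⁻¹ + z2 a‖ := by rw [add_comm]
          _ ≥ ‖g⁻¹‖ - ‖z2 a‖ := norm_add_ge _ _
          _ ≥ |γ|⁻¹ - K := by
              rw [hginv]
              exact sub_le_sub_left (hK (Sum.inr (Sum.inr a))) _
      have h3' : ‖Z1 i g‖ < |γ|⁻¹ - K := by
        have : K + C < |γ|⁻¹ - K := by rw [hT] at hinvγ; linarith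
        exact lt_of_le_of_lt (hnZ1 i) this
      rw [h] at h3'
      exact absurd h2' (not_le.2 h3')
    -- zero property for the first family
    have hz1fam : ∀ i, chiFun z1 m1 l1 (Z1 i g) + chiFun z2 m2 l2 (Z1 i g - g⁻¹) - linf = 0 := by
      intro i
      have hQe := evalQ_eq z1 m1 l1 z2 m2 l2 linf hgne (hp1a i) (hp1b i)
      rw [(H1 i).2.1] at hQe
      rcases mul_eq_zero.1 hQe.symm with h | h
      · exact absurd h (mul_ne_zero (evalA_ne_zero z1 m1 (hp1a i))
          (evalB_ne_zero z2 m2 hgne (hp1b i)))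
      · exact h
    -- pole conditions for the second family
    have hnegginv : (-g)⁻¹ = -g⁻¹ := by rw [inv_neg]
    have hp2a : ∀ j a, Z2 j (-g) ≠ z2 a := by
      intro j a h
      have : ‖ζ2 j - z2 a‖ ≤ C * |γ| := by
        calc ‖ζ2 j - z2 a‖ = ‖ζ2 j - Z2 j (-g)‖ := by rw [h]
          _ = ‖Z2 j (-g) - ζ2 j‖ := by rw [norm_sub_rev]
          _ ≤ C * |γ| := hb2 j
      exact absurd this (not_le.2 (lt_of_lt_of_le hCγd0
        (hd0le (Sum.inr (Sum.inr (j, a))))))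
    have hp2b : ∀ j a, Z2 j (-g) ≠ z1 a + (-g)⁻¹ := by
      intro j a h
      have h2' : ‖z1 a + (-g)⁻¹‖ ≥ |γ|⁻¹ - K := by
        calc ‖z1 a + (-g)⁻¹‖ = ‖(-g)⁻¹ + z1 a‖ := by rw [add_comm]
          _ ≥ ‖(-g)⁻¹‖ - ‖z1 a‖ := norm_add_ge _ _
          _ ≥ |γ|⁻¹ - K := by
              rw [norm_inv, norm_neg, hgnorm]
              exact sub_le_sub_left (hK (Sum.inr (Sum.inl a))) _
      have h3' : ‖Z2 j (-g)‖ < |γ|⁻¹ - K := by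
        have : K + C < |γ|⁻¹ - K := by rw [hT] at hinvγ; linarith
        exact lt_of_le_of_lt (hnZ2 j) this
      rw [h] at h3'
      exact absurd h2' (not_le.2 h3')
    have hz2fam : ∀ j, chiFun z2 m2 l2 (Z2 j (-g)) +
        chiFun z1 m1 l1 (Z2 j (-g) - (-g)⁻¹) - linf = 0 := by
      intro j
      have hQe := evalQ_eq z2 m2 l2 z1 m1 l1 linf (neg_ne_zero.2 hgne) (hp2a j) (hp2b j)
      rw [(H2 j).2.1] at hQe
      rcases mul_eq_zero.1 hQe.symm with h | h
      · exact absurd h (mul_ne_zero (evalA_ne_zero z2 m2 (hp2a j))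
          (evalB_ne_zero z1 m1 (neg_ne_zero.2 hgne) (hp2b j)))
      · exact h
    -- norms of the second family of zeros
    have hnfam2 : ∀ j, ‖ζfam (Sum.inr j) γ‖ ≥ |γ|⁻¹ - (K + C) := by
      intro j
      show ‖g⁻¹ + Z2 j (-g)‖ ≥ _
      calc ‖g⁻¹ + Z2 j (-g)‖ ≥ ‖g⁻¹‖ - ‖Z2 j (-g)‖ := norm_add_ge _ _
        _ ≥ |γ|⁻¹ - (K + C) := by rw [hginv]; exact sub_le_sub_left (hnZ2 j) _
    -- pole conditions and zero property for the whole family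
    have harg2 : ∀ j, ζfam (Sum.inr j) γ - g⁻¹ = Z2 j (-g) := by
      intro j
      show g⁻¹ + Z2 j (-g) - g⁻¹ = Z2 j (-g)
      ring
    have hnegginv : (-g)⁻¹ = -g⁻¹ := by rw [inv_neg]
    have hfam_pole1 : ∀ k a, ζfam k γ ≠ z1 a := by
      rintro (i | j) a
      · exact hp1a i a
      · intro h
        have h1' : ‖z1 a‖ ≤ K := hK (Sum.inr (Sum.inl a))
        have h2' := hnfam2 j
        rw [h] at h2'
        rw [hT] at hinvγ
        have : |γ|⁻¹ - (K + C) ≤ K := h2'.trans h1'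
        linarith
    have hfam_pole2 : ∀ k a, ζfam k γ ≠ z2 a + g⁻¹ := by
      rintro (i | j) a
      · exact hp1b i a
      · intro h
        apply hp2a j a
        have h' : ζfam (Sum.inr j) γ - g⁻¹ = z2 a + g⁻¹ - g⁻¹ := by rw [h]
        rw [harg2 j] at h'
        rw [h']; ring
    have hfam_zero : ∀ k, chiFun z1 m1 l1 (ζfam k γ) +
        chiFun z2 m2 l2 (ζfam k γ - g⁻¹) - linf = 0 := by
      rintro (i | j)
      · exact hz1fam i
      · have hthis := hz2fam j
        have harg1 : Z2 j (-g) - (-g)⁻¹ = ζfam (Sum.inr j) γ := by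
          show Z2 j (-g) - (-g)⁻¹ = g⁻¹ + Z2 j (-g)
          rw [hnegginv]; ring
        rw [harg1] at hthis
        rw [harg2 j]
        linear_combination hthis
    have hfam_Q : ∀ k, (Qpoly z1 m1 l1 z2 m2 l2 linf g).eval (ζfam k γ) = 0 := by
      intro k
      rw [evalQ_eq z1 m1 l1 z2 m2 l2 linf hgne (hfam_pole1 k) (hfam_pole2 k), hfam_zero k,
        mul_zero]
    have hfam_inj : Function.Injective fun k => ζfam k γ := by
      intro k k' heq
      simp only at heq
      match k, k' with
      | Sum.inl i, Sum.inl i' =>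
        by_contra hne
        have hii' : i ≠ i' := fun h => hne (by rw [h])
        have : ‖ζ1 i - ζ1 i'‖ ≤ 2 * C * |γ| := by
          have heq' : Z1 i g = Z1 i' g := heq
          calc ‖ζ1 i - ζ1 i'‖ ≤ ‖ζ1 i - Z1 i g‖ + ‖Z1 i g - ζ1 i'‖ := tri _ _ _
            _ = ‖Z1 i g - ζ1 i‖ + ‖Z1 i' g - ζ1 i'‖ := by rw [norm_sub_rev, heq']
            _ ≤ C * |γ| + C * |γ| := add_le_add (hb1 i) (hb1 i')
            _ = 2 * C * |γ| := by ring
        exact absurd this (not_le.2 (lt_of_lt_of_le h2Cγd0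
          (hd0le (Sum.inl (Sum.inl ⟨(i, i'), hii'⟩)))))
      | Sum.inl i, Sum.inr j =>
        exfalso
        have h1' : ‖ζfam (Sum.inl i) γ‖ ≤ K + C := hnZ1 i
        have h2' := hnfam2 j
        rw [show ζfam (Sum.inl i) γ = ζfam (Sum.inr j) γ from heq] at h1'
        have : K + C + 1 ≤ K + C := by
          calc K + C + 1 ≤ |γ|⁻¹ - (K + C) := hbig
            _ ≤ ‖ζfam (Sum.inr j) γ‖ := h2'
            _ ≤ K + C := h1'
        linarith
      | Sum.inr j, Sum.inl i =>
        exfalso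
        have h1' : ‖ζfam (Sum.inl i) γ‖ ≤ K + C := hnZ1 i
        have h2' := hnfam2 j
        rw [show ζfam (Sum.inl i) γ = ζfam (Sum.inr j) γ from heq.symm] at h1'
        have : K + C + 1 ≤ K + C := by
          calc K + C + 1 ≤ |γ|⁻¹ - (K + C) := hbig
            _ ≤ ‖ζfam (Sum.inr j) γ‖ := h2'
            _ ≤ K + C := h1'
        linarith
      | Sum.inr j, Sum.inr j' =>
        by_contra hne
        have hjj' : j ≠ j' := fun h => hne (by rw [h])
        have heq' : Z2 j (-g) = Z2 j' (-g) := by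
          have h5 : g⁻¹ + Z2 j (-g) = g⁻¹ + Z2 j' (-g) := heq
          exact add_left_cancel h5
        have : ‖ζ2 j - ζ2 j'‖ ≤ 2 * C * |γ| := by
          calc ‖ζ2 j - ζ2 j'‖ ≤ ‖ζ2 j - Z2 j (-g)‖ + ‖Z2 j (-g) - ζ2 j'‖ := tri _ _ _
            _ = ‖Z2 j (-g) - ζ2 j‖ + ‖Z2 j' (-g) - ζ2 j'‖ := by rw [norm_sub_rev, heq']
            _ ≤ C * |γ| + C * |γ| := add_le_add (hb2 j) (hb2 j')
            _ = 2 * C * |γ| := by ring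
        exact absurd this (not_le.2 (lt_of_lt_of_le h2Cγd0
          (hd0le (Sum.inl (Sum.inr ⟨(j, j'), hjj'⟩)))))
    -- the five statements
    refine ⟨hfam_inj, ?_, ?_, ?_, ?_⟩
    · -- simple zeros
      rintro (i | j)
      · exact ⟨hfam_pole1 (Sum.inl i), hfam_pole2 (Sum.inl i), hfam_zero (Sum.inl i),
          (H1 i).2.2 hgne (hp1a i) (hp1b i)⟩
      · refine ⟨hfam_pole1 (Sum.inr j), hfam_pole2 (Sum.inr j), hfam_zero (Sum.inr j), ?_⟩
        have hcore := (H2 j).2.2 (neg_ne_zero.2 hgne) (hp2a j) (hp2b j)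
        intro h0
        apply hcore
        have hkey := deriv_comp_sub_const
          (f := fun v => chiFun z2 m2 l2 v + chiFun z1 m1 l1 (v - (-g)⁻¹) - linf)
          (a := g⁻¹) (x := ζfam (Sum.inr j) γ)
        beta_reduce at hkey
        have hfeq : (fun x : ℂ => chiFun z2 m2 l2 (x - g⁻¹) +
            chiFun z1 m1 l1 (x - g⁻¹ - (-g)⁻¹) - linf) =
            (fun w => chiFun z1 m1 l1 w + chiFun z2 m2 l2 (w - g⁻¹) - linf) := by
          funext x
          rw [hnegginv, sub_neg_eq_add, sub_add_cancel]
          ring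
        rw [hfeq, h0, harg2 j] at hkey
        exact hkey.symm
    · -- completeness
      intro w hw1 hw2 hzero
      by_contra hcon
      push_neg at hcon
      have hQw : (Qpoly z1 m1 l1 z2 m2 l2 linf g).eval w = 0 := by
        rw [evalQ_eq z1 m1 l1 z2 m2 l2 linf hgne hw1 hw2, hzero, mul_zero]
      have hpne : Qpoly z1 m1 l1 z2 m2 l2 linf g ≠ 0 := by
        intro h0
        have hc := coeffQ z1 m1 l1 z2 m2 l2 linf g
        rw [h0, Polynomial.coeff_zero] at hc
        have hc' : linf * g ^ (∑ a, (m2 a + 1)) = 0 := by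
          have := hc.symm
          rwa [neg_eq_zero] at this
        exact (mul_ne_zero hlinf (pow_ne_zero _ hgne)) hc'
      have hFinj : Function.Injective
          (fun o : Option (Fin M₁ ⊕ Fin M₂) => Option.elim o w (fun k => ζfam k γ)) := by
        intro o o' heq
        match o, o' with
        | none, none => rfl
        | none, some k => exact absurd heq.symm (hcon k)
        | some k, none => exact absurd heq (hcon k)
        | some k, some k' => exact congrArg some (hfam_inj heq)
      have heval : ∀ o : Option (Fin M₁ ⊕ Fin M₂),
          (Qpoly z1 m1 l1 z2 m2 l2 linf g).eval (Option.elim o w (fun k => ζfam k γ)) = 0 := by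
        rintro (_ | k)
        · exact hQw
        · exact hfam_Q k
      have hcard : (Qpoly z1 m1 l1 z2 m2 l2 linf g).natDegree <
          Fintype.card (Option (Fin M₁ ⊕ Fin M₂)) := by
        have hle := natDegreeQ_le z1 m1 l1 z2 m2 l2 linf g
        have hcd : Fintype.card (Option (Fin M₁ ⊕ Fin M₂)) = M₁ + M₂ + 1 := by
          simp
        rw [hcd]
        rw [hM1, hM2]
        omega
      exact hpne (Polynomial.eq_zero_of_natDegree_lt_card_of_eval_eq_zero _ hFinj heval hcard)
    · -- asymptotics, first family
      intro i
      exact hb1 i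
    · -- asymptotics, second family
      intro j
      have h5 : ζfam (Sum.inr j) γ - g⁻¹ - ζ2 j = Z2 j (-g) - ζ2 j := by
        rw [harg2 j]
      rw [h5]
      exact hb2 j
  refine ⟨ε, hεpos, ζfam, C, hC0, hmain, ?_⟩
  -- uniqueness of the labelling
  intro ζ' C' hC'pos hyp
  set T' : ℝ := 2 * K + 2 * C + 2 * C' + 2 with hT'
  have hT'pos : (0 : ℝ) < T' := by rw [hT']; linarith
  refine ⟨min ε (min (d0 / (C + C' + 1)) (1 / T')),
    lt_min hεpos (lt_min (div_pos hd0 (by linarith)) (div_pos one_pos hT'pos)), ?_⟩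
  intro γ hγ0 hγε'
  have hγε : |γ| < ε := hγε'.trans_le (min_le_left _ _)
  obtain ⟨hinj, hsimple, hcomplete, hbζ1, hbζ2⟩ := hmain γ hγ0 hγε
  obtain ⟨hz', hb1', hb2'⟩ := hyp γ hγ0 hγε
  set g : ℂ := ((γ : ℝ) : ℂ) with hgdef
  have hgnorm : ‖g‖ = |γ| := Complex.norm_real γ
  have hγne : γ ≠ 0 := abs_pos.1 hγ0
  have hgne : g ≠ 0 := Complex.ofReal_ne_zero.2 hγne
  have hγ1 : |γ| < 1 := hγε.trans_le ((min_le_right _ _).trans (min_le_left _ _))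
  have hγd0' : (C + C' + 1) * |γ| < d0 := by
    have h1' : |γ| < d0 / (C + C' + 1) :=
      hγε'.trans_le ((min_le_right _ _).trans (min_le_left _ _))
    exact (lt_div_iff₀' (by linarith)).1 h1'
  have hinv' : T' ≤ |γ|⁻¹ := by
    have h1' : |γ| ≤ 1 / T' :=
      (hγε'.trans_le ((min_le_right _ _).trans (min_le_right _ _))).le
    have h2' := one_div_le_one_div_of_le hγ0 h1'
    rwa [one_div_one_div, one_div] at h2'
  have hginv : ‖g⁻¹‖ = |γ|⁻¹ := by rw [norm_inv, hgnorm]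
  have hCγC : C * |γ| ≤ C := by nlinarith [abs_nonneg γ]
  have hC'γC' : C' * |γ| ≤ C' := by nlinarith [abs_nonneg γ]
  -- norm bounds for the reference family
  have hnf1 : ∀ i, ‖ζfam (Sum.inl i) γ‖ ≤ K + C := by
    intro i
    calc ‖ζfam (Sum.inl i) γ‖ ≤ ‖ζ1 i‖ + ‖ζfam (Sum.inl i) γ - ζ1 i‖ := by
          simpa using norm_add_le (ζ1 i) (ζfam (Sum.inl i) γ - ζ1 i)
      _ ≤ K + C := add_le_add (hK (Sum.inl (Sum.inl i))) ((hbζ1 i).trans hCγC)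
  have hnf2 : ∀ j, |γ|⁻¹ - (K + C) ≤ ‖ζfam (Sum.inr j) γ‖ := by
    intro j
    have e2 : g⁻¹ = ζfam (Sum.inr j) γ - (ζfam (Sum.inr j) γ - g⁻¹ - ζ2 j) - ζ2 j := by ring
    have e3 : ‖g⁻¹‖ ≤ ‖ζfam (Sum.inr j) γ‖ + ‖ζfam (Sum.inr j) γ - g⁻¹ - ζ2 j‖ + ‖ζ2 j‖ := by
      rw [congrArg norm e2]
      calc ‖ζfam (Sum.inr j) γ - (ζfam (Sum.inr j) γ - g⁻¹ - ζ2 j) - ζ2 j‖ ≤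
            ‖ζfam (Sum.inr j) γ - (ζfam (Sum.inr j) γ - g⁻¹ - ζ2 j)‖ + ‖ζ2 j‖ :=
          norm_sub_le _ _
        _ ≤ ‖ζfam (Sum.inr j) γ‖ + ‖ζfam (Sum.inr j) γ - g⁻¹ - ζ2 j‖ + ‖ζ2 j‖ :=
          add_le_add_left (norm_sub_le _ _) _
    rw [hginv] at e3
    have h6 := (hbζ2 j).trans hCγC
    have h7 : ‖ζ2 j‖ ≤ K := hK (Sum.inl (Sum.inr j))
    linarith
  -- now match each ζ' value with a member of the family
  rintro (i | j)
  · -- first family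
    set x : ℂ := ζ' (Sum.inl i) γ with hx
    have hxb : ‖x - ζ1 i‖ ≤ C' * |γ| := hb1' i
    have hxn : ‖x‖ ≤ K + C' := by
      calc ‖x‖ ≤ ‖ζ1 i‖ + ‖x - ζ1 i‖ := by simpa using norm_add_le (ζ1 i) (x - ζ1 i)
        _ ≤ K + C' := add_le_add (hK (Sum.inl (Sum.inl i))) (hxb.trans hC'γC')
    have hxp1 : ∀ a, x ≠ z1 a := by
      intro a h
      have h5 : ‖ζ1 i - z1 a‖ ≤ C' * |γ| := by
        calc ‖ζ1 i - z1 a‖ = ‖x - ζ1 i‖ := by rw [← h, norm_sub_rev]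
          _ ≤ C' * |γ| := hxb
      have h6 : C' * |γ| < d0 := by nlinarith [abs_nonneg γ, hC0]
      exact absurd h5 (not_le.2 (lt_of_lt_of_le h6 (hd0le (Sum.inr (Sum.inl (i, a))))))
    have hxp2 : ∀ a, x ≠ z2 a + g⁻¹ := by
      intro a h
      have h2' : |γ|⁻¹ - K ≤ ‖z2 a + g⁻¹‖ := by
        calc |γ|⁻¹ - K ≤ ‖g⁻¹‖ - ‖z2 a‖ := by
              rw [hginv]
              exact sub_le_sub_left (hK (Sum.inr (Sum.inr a))) _
          _ ≤ ‖g⁻¹ + z2 a‖ := norm_add_ge _ _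
          _ = ‖z2 a + g⁻¹‖ := by rw [add_comm]
      rw [← h] at h2'
      have : K + C' < |γ|⁻¹ - K := by rw [hT'] at hinv'; linarith
      exact absurd h2' (not_le.2 (lt_of_le_of_lt hxn this))
    obtain ⟨k', hk'⟩ := hcomplete x hxp1 hxp2 (hz' (Sum.inl i))
    match k' with
    | Sum.inl i' =>
      have hii : i' = i := by
        by_contra hne
        have h5 : ‖ζ1 i' - ζ1 i‖ ≤ C * |γ| + C' * |γ| := by
          calc ‖ζ1 i' - ζ1 i‖ ≤ ‖ζ1 i' - ζfam (Sum.inl i') γ‖ + ‖ζfam (Sum.inl i') γ - ζ1 i‖ :=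
              tri _ _ _
            _ = ‖ζfam (Sum.inl i') γ - ζ1 i'‖ + ‖x - ζ1 i‖ := by rw [norm_sub_rev, hk']
            _ ≤ C * |γ| + C' * |γ| := add_le_add (hbζ1 i') hxb
        have h6 : C * |γ| + C' * |γ| < d0 := by nlinarith [abs_nonneg γ]
        exact absurd h5 (not_le.2 (lt_of_lt_of_le h6
          (hd0le (Sum.inl (Sum.inl ⟨(i', i), hne⟩)))))
      rw [← hk', hii]
    | Sum.inr j' =>
      exfalso
      have h5 := hnf2 j'
      rw [hk'] at h5
      have h6 : K + C' < |γ|⁻¹ - (K + C) := by rw [hT'] at hinv'; linarith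
      have := h5.trans hxn
      linarith
  · -- second family
    set x : ℂ := ζ' (Sum.inr j) γ with hx
    have hxb : ‖x - g⁻¹ - ζ2 j‖ ≤ C' * |γ| := hb2' j
    have hxn : |γ|⁻¹ - (K + C') ≤ ‖x‖ := by
      have e2 : g⁻¹ = x - (x - g⁻¹ - ζ2 j) - ζ2 j := by ring
      have e3 : ‖g⁻¹‖ ≤ ‖x‖ + ‖x - g⁻¹ - ζ2 j‖ + ‖ζ2 j‖ := by
        rw [congrArg norm e2]
        calc ‖x - (x - g⁻¹ - ζ2 j) - ζ2 j‖ ≤ ‖x - (x - g⁻¹ - ζ2 j)‖ + ‖ζ2 j‖ := norm_sub_le _ _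
          _ ≤ ‖x‖ + ‖x - g⁻¹ - ζ2 j‖ + ‖ζ2 j‖ := add_le_add_left (norm_sub_le _ _) _
      rw [hginv] at e3
      have h6 := hxb.trans hC'γC'
      have h7 : ‖ζ2 j‖ ≤ K := hK (Sum.inl (Sum.inr j))
      linarith
    have hxp1 : ∀ a, x ≠ z1 a := by
      intro a h
      have h5 : ‖z1 a‖ ≤ K := hK (Sum.inr (Sum.inl a))
      rw [h] at hxn
      have : K + 1 ≤ |γ|⁻¹ - (K + C') := by rw [hT'] at hinv'; linarith
      linarith [hxn.trans h5]
    have hxp2 : ∀ a, x ≠ z2 a + g⁻¹ := by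
      intro a h
      have h5 : ‖ζ2 j - z2 a‖ ≤ C' * |γ| := by
        calc ‖ζ2 j - z2 a‖ = ‖(x - g⁻¹ - ζ2 j)‖ := by
              rw [h]
              have : z2 a + g⁻¹ - g⁻¹ - ζ2 j = -(ζ2 j - z2 a) := by ring
              rw [this, norm_neg]
          _ ≤ C' * |γ| := hxb
      have h6 : C' * |γ| < d0 := by nlinarith [abs_nonneg γ, hC0]
      exact absurd h5 (not_le.2 (lt_of_lt_of_le h6 (hd0le (Sum.inr (Sum.inr (j, a))))))
    obtain ⟨k', hk'⟩ := hcomplete x hxp1 hxp2 (hz' (Sum.inr j))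
    match k' with
    | Sum.inl i' =>
      exfalso
      have h5 := hnf1 i'
      rw [hk'] at h5
      have h6 : K + C < |γ|⁻¹ - (K + C') := by rw [hT'] at hinv'; linarith
      linarith [hxn.trans h5]
    | Sum.inr j' =>
      have hjj : j' = j := by
        by_contra hne
        have h5 : ‖ζ2 j' - ζ2 j‖ ≤ C * |γ| + C' * |γ| := by
          calc ‖ζ2 j' - ζ2 j‖ ≤ ‖ζ2 j' - (x - g⁻¹)‖ + ‖(x - g⁻¹) - ζ2 j‖ := tri _ _ _
            _ = ‖ζfam (Sum.inr j') γ - g⁻¹ - ζ2 j'‖ + ‖x - g⁻¹ - ζ2 j‖ := by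
                rw [hk', show ζ2 j' - (x - g⁻¹) = -(x - g⁻¹ - ζ2 j') from by ring, norm_neg]
            _ ≤ C * |γ| + C' * |γ| := add_le_add (hbζ2 j') hxb
        have h6 : C * |γ| + C' * |γ| < d0 := by nlinarith [abs_nonneg γ]
        exact absurd h5 (not_le.2 (lt_of_lt_of_le h6
          (hd0le (Sum.inl (Sum.inr ⟨(j', j), hne⟩)))))
      rw [← hk', hjj]
end

section
/- Decoupling of the quadratic charges (Theorem 2.1, second part, density/bilinear-form version). Let V be a complex vector space with a symmetric bilinear form B, let Γ_k(z) = Σ_{α∈Σ_k} Σ_{p=0}^{m_α−1} v^α_p (z−z_α)^{−(p+1)} (v^α_p ∈ V, k = 1,2) be V-valued rational functions with the same poles and pole orders as χ_k, and set Γ_γ(z) = Γ_1(z) + Γ_2(z − γ^{−1}). Define Q_i(γ) = −B(Γ_γ(ζ_i(γ)), Γ_γ(ζ_i(γ)))/(2 φ_γ'(ζ_i(γ))), and set Q^{(1)}_i = −B(Γ_1(ζ^{(1)}_i), Γ_1(ζ^{(1)}_i))/(2 φ_1'(ζ^{(1)}_i)) for i ≤ M_1 and Q^{(2)}_i = −B(Γ_2(ζ^{(2)}_i),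 Γ_2(ζ^{(2)}_i))/(2 φ_2'(ζ^{(2)}_i)) for i > M_1. Then Q_i(γ) → Q^{(k)}_i as γ → 0 (with k = 1 for i ≤ M_1 and k = 2 for i > M_1); consequently, for any coefficients ε_1, …, ε_M ∈ ℂ, Σ_{i=1}^M ε_i Q_i(γ) → Σ_{i=1}^{M_1} ε_i Q^{(1)}_i + Σ_{i=M_1+1}^M ε_i Q^{(2)}_i as γ → 0 (the decoupling of the coupled Hamiltonian into the sum of the two Hamiltonians). -/
open scoped BigOperators Topology
open Filter

/-- A `V`-valued Gaudin Lax matrix `Γ(w) = Σ_α Σ_p v^α_p (w - z_α)^{-(p+1)}`. -/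
noncomputable def gamFun {n : ℕ} {V : Type*} [AddCommGroup V] [Module ℂ V]
    (z : Fin n → ℂ) (m : Fin n → ℕ) (v : Fin n → ℕ → V) (w : ℂ) : V :=
  ∑ a, ∑ p ∈ Finset.range (m a + 1), ((w - z a) ^ (p + 1))⁻¹ • v a p

noncomputable def chiD {n : ℕ} (z : Fin n → ℂ) (m : Fin n → ℕ)
    (l : Fin n → ℕ → ℂ) (w : ℂ) : ℂ :=
  ∑ a, ∑ p ∈ Finset.range (m a + 1), -((p : ℂ) + 1) * l a p / (w - z a) ^ (p + 2)

lemma hasDerivAt_chiFun {n : ℕ} (z : Fin n → ℂ) (m : Fin n → ℕ) (l : Fin n → ℕ → ℂ)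
    {w : ℂ} (hw : ∀ a, w ≠ z a) :
    HasDerivAt (chiFun z m l) (chiD z m l w) w := by
  unfold chiFun chiD
  apply HasDerivAt.fun_sum
  intro a _
  apply HasDerivAt.fun_sum
  intro p _
  have hne : w - z a ≠ 0 := sub_ne_zero.mpr (hw a)
  have h1 : HasDerivAt (fun w : ℂ => (w - z a) ^ (p + 1))
      (((p : ℂ) + 1) * (w - z a) ^ p) w := by
    simpa using ((hasDerivAt_id w).sub_const (z a)).fun_pow (p + 1)
  have h2 := (h1.inv (pow_ne_zero _ hne)).const_mul (l a p)
  have harith : l a p * (-(((p : ℂ) + 1) * (w - z a) ^ p) / ((w - z a) ^ (p + 1)) ^ 2)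
      = -((p : ℂ) + 1) * l a p / (w - z a) ^ (p + 2) := by
    rw [← pow_mul]
    field_simp
    ring
  rw [harith] at h2
  simpa [div_eq_mul_inv] using h2

lemma hasDerivAt_coupled {n₁ n₂ : ℕ} (z1 : Fin n₁ → ℂ) (m1 : Fin n₁ → ℕ) (l1 : Fin n₁ → ℕ → ℂ)
    (z2 : Fin n₂ → ℂ) (m2 : Fin n₂ → ℕ) (l2 : Fin n₂ → ℕ → ℂ) (linf c : ℂ)
    {w : ℂ} (hw1 : ∀ a, w ≠ z1 a) (hw2 : ∀ a, w - c ≠ z2 a) :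
    HasDerivAt (fun w => chiFun z1 m1 l1 w + chiFun z2 m2 l2 (w - c) - linf)
      (chiD z1 m1 l1 w + chiD z2 m2 l2 (w - c)) w := by
  have h2 : HasDerivAt (fun w : ℂ => chiFun z2 m2 l2 (w - c)) (chiD z2 m2 l2 (w - c)) w := by
    exact HasDerivAt.comp_sub_const w c (hasDerivAt_chiFun z2 m2 l2 hw2)
  exact ((hasDerivAt_chiFun z1 m1 l1 hw1).add h2).sub_const linf

lemma tendsto_inv_pow_fin {α : Type*} {l : Filter α} {f : α → ℂ} {w z : ℂ}
    (h : Tendsto f l (𝓝 w)) (hz : w ≠ z) (k : ℕ) :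
    Tendsto (fun x => ((f x - z) ^ k)⁻¹) l (𝓝 (((w - z) ^ k)⁻¹)) :=
  ((h.sub_const z).pow _).inv₀ (pow_ne_zero _ (sub_ne_zero.mpr hz))

lemma tendsto_inv_pow_inf {α : Type*} {l : Filter α} {f : α → ℂ}
    (h : Tendsto (fun x => ‖f x‖) l atTop) (z : ℂ) {k : ℕ} (hk : k ≠ 0) :
    Tendsto (fun x => ((f x - z) ^ k)⁻¹) l (𝓝 0) := by
  have h1 : Tendsto (fun x => ‖f x - z‖) l atTop := by
    apply tendsto_atTop_mono (fun x => ?_) (tendsto_atTop_add_const_right l (-‖z‖) h)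
    have h := norm_sub_norm_le (f x) z
    linarith
  have h2 : Tendsto (fun x => ‖f x - z‖ ^ k) l atTop :=
    (tendsto_pow_atTop hk).comp h1
  have h3 : Tendsto (fun x => (‖f x - z‖ ^ k)⁻¹) l (𝓝 0) := h2.inv_tendsto_atTop
  rw [tendsto_zero_iff_norm_tendsto_zero]
  simpa [norm_inv, norm_pow] using h3

lemma B_gam_gam {n n' : ℕ} {V : Type*} [AddCommGroup V] [Module ℂ V]
    (B : V →ₗ[ℂ] V →ₗ[ℂ] ℂ)
    (z : Fin n → ℂ) (m : Fin n → ℕ) (v : Fin n → ℕ → V)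
    (z' : Fin n' → ℂ) (m' : Fin n' → ℕ) (v' : Fin n' → ℕ → V) (w w' : ℂ) :
    B (gamFun z m v w) (gamFun z' m' v' w')
      = ∑ b, ∑ q ∈ Finset.range (m' b + 1), ∑ a, ∑ p ∈ Finset.range (m a + 1),
          ((w' - z' b) ^ (q + 1))⁻¹ * (((w - z a) ^ (p + 1))⁻¹ * B (v a p) (v' b q)) := by
  simp [gamFun, map_sum, map_smul, LinearMap.sum_apply, LinearMap.smul_apply, smul_eq_mul,
    Finset.mul_sum]

lemma tendsto_B_gam_gam {n n' : ℕ} {V : Type*} [AddCommGroup V] [Module ℂ V]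
    (B : V →ₗ[ℂ] V →ₗ[ℂ] ℂ)
    (z : Fin n → ℂ) (m : Fin n → ℕ) (v : Fin n → ℕ → V)
    (z' : Fin n' → ℂ) (m' : Fin n' → ℕ) (v' : Fin n' → ℕ → V)
    {α : Type*} {l : Filter α} {u u' : α → ℂ} {c : Fin n → ℕ → ℂ} {c' : Fin n' → ℕ → ℂ}
    (h1 : ∀ a p, Tendsto (fun x => ((u x - z a) ^ (p + 1))⁻¹) l (𝓝 (c a p)))
    (h2 : ∀ b q, Tendsto (fun x => ((u' x - z' b) ^ (q + 1))⁻¹) l (𝓝 (c' b q))) :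
    Tendsto (fun x => B (gamFun z m v (u x)) (gamFun z' m' v' (u' x))) l
      (𝓝 (∑ b, ∑ q ∈ Finset.range (m' b + 1), ∑ a, ∑ p ∈ Finset.range (m a + 1),
          c' b q * (c a p * B (v a p) (v' b q)))) := by
  simp only [B_gam_gam]
  refine tendsto_finset_sum _ fun b _ => tendsto_finset_sum _ fun q _ =>
    tendsto_finset_sum _ fun a _ => tendsto_finset_sum _ fun p _ => ?_
  exact (h2 b q).mul ((h1 a p).mul tendsto_const_nhds)

lemma tendsto_chiD_fin {n : ℕ} (z : Fin n → ℂ) (m : Fin n → ℕ) (l1 : Fin n → ℕ → ℂ)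
    {α : Type*} {l : Filter α} {u : α → ℂ} {w : ℂ}
    (h : Tendsto u l (𝓝 w)) (hw : ∀ a, w ≠ z a) :
    Tendsto (fun x => chiD z m l1 (u x)) l (𝓝 (chiD z m l1 w)) := by
  unfold chiD
  refine tendsto_finset_sum _ fun a _ => tendsto_finset_sum _ fun p _ => ?_
  simp only [div_eq_mul_inv]
  exact tendsto_const_nhds.mul (tendsto_inv_pow_fin h (hw a) (p + 2))

lemma tendsto_chiD_inf {n : ℕ} (z : Fin n → ℂ) (m : Fin n → ℕ) (l1 : Fin n → ℕ → ℂ)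
    {α : Type*} {l : Filter α} {u : α → ℂ}
    (h : Tendsto (fun x => ‖u x‖) l atTop) :
    Tendsto (fun x => chiD z m l1 (u x)) l (𝓝 0) := by
  unfold chiD
  have : Tendsto (fun x => ∑ a : Fin n, ∑ p ∈ Finset.range (m a + 1),
      -((p : ℂ) + 1) * l1 a p / (u x - z a) ^ (p + 2)) l (𝓝 (∑ a : Fin n,
        ∑ p ∈ Finset.range (m a + 1), (0:ℂ))) := by
    refine tendsto_finset_sum _ fun a _ => tendsto_finset_sum _ fun p _ => ?_
    simp only [div_eq_mul_inv]
    simpa using tendsto_const_nhds.mul (tendsto_inv_pow_inf h (z a) (k := p + 2) (by omega))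
  simpa using this

lemma norm_add_atTop {α : Type*} {l : Filter α} {h g : α → ℂ} {w : ℂ}
    (hh : Tendsto h l (𝓝 w)) (hg : Tendsto (fun x => ‖g x‖) l atTop) :
    Tendsto (fun x => ‖h x + g x‖) l atTop := by
  have hb : ∀ᶠ x in l, ‖h x‖ ≤ ‖w‖ + 1 :=
    hh.norm.eventually (eventually_le_nhds (by linarith))
  apply tendsto_atTop_mono' l (hb.mono fun x hx => ?_)
    (tendsto_atTop_add_const_right l (-(‖w‖ + 1)) hg)
  have h2 : ‖g x‖ ≤ ‖h x + g x‖ + ‖h x‖ := by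
    calc ‖g x‖ = ‖(h x + g x) - h x‖ := by ring_nf
    _ ≤ ‖h x + g x‖ + ‖h x‖ := norm_sub_le _ _
  linarith

/-- **Decoupling of the quadratic charges** (Theorem 2.1, second part, density/bilinear-form
version).  With the coupled twist function `φ_γ` and coupled Gaudin Lax matrix
`Γ_γ(z) = Γ₁(z) + Γ₂(z - γ⁻¹)`, the quadratic charges
`Q_i(γ) = -B(Γ_γ(ζ_i(γ)), Γ_γ(ζ_i(γ)))/(2 φ_γ'(ζ_i(γ)))` converge, as γ → 0, to the
corresponding decoupled charges; consequently any linear combination `Σ ε_i Q_i(γ)` converges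
to the sum of the two decoupled Hamiltonians. -/
theorem decoupling_of_quadratic_charges
    {n₁ n₂ M₁ M₂ : ℕ} {V : Type*} [AddCommGroup V] [Module ℂ V]
    (B : V →ₗ[ℂ] V →ₗ[ℂ] ℂ) (hB : ∀ x y, B x y = B y x)
    (z1 : Fin n₁ → ℂ) (m1 : Fin n₁ → ℕ) (l1 : Fin n₁ → ℕ → ℂ)
    (z2 : Fin n₂ → ℂ) (m2 : Fin n₂ → ℕ) (l2 : Fin n₂ → ℕ → ℂ)
    (linf : ℂ) (hlinf : linf ≠ 0)
    (hz1 : Function.Injective z1) (hz2 : Function.Injective z2)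
    (hl1 : ∀ a, l1 a (m1 a) ≠ 0) (hl2 : ∀ a, l2 a (m2 a) ≠ 0)
    (hM1 : M₁ = ∑ a, (m1 a + 1)) (hM2 : M₂ = ∑ a, (m2 a + 1))
    (ζ1 : Fin M₁ → ℂ) (ζ2 : Fin M₂ → ℂ)
    (hζ1inj : Function.Injective ζ1) (hζ2inj : Function.Injective ζ2)
    (hζ1p : ∀ i a, ζ1 i ≠ z1 a) (hζ2p : ∀ j a, ζ2 j ≠ z2 a)
    (hζ1z : ∀ i, chiFun z1 m1 l1 (ζ1 i) - linf = 0)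
    (hζ2z : ∀ j, chiFun z2 m2 l2 (ζ2 j) - linf = 0)
    (hζ1s : ∀ i, deriv (fun w => chiFun z1 m1 l1 w - linf) (ζ1 i) ≠ 0)
    (hζ2s : ∀ j, deriv (fun w => chiFun z2 m2 l2 w - linf) (ζ2 j) ≠ 0)
    (v1 : Fin n₁ → ℕ → V) (v2 : Fin n₂ → ℕ → V)
    -- the zeros `ζ i γ` of the coupled twist function provided by the decoupling lemma,
    -- uniquely characterised by the asymptotics below
    (ε C : ℝ) (hε : 0 < ε) (hC : 0 < C)
    (ζ : Fin M₁ ⊕ Fin M₂ → ℝ → ℂ)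
    (hζ : ∀ γ : ℝ, 0 < |γ| → |γ| < ε →
      (Function.Injective fun i => ζ i γ) ∧
      (∀ i, chiFun z1 m1 l1 (ζ i γ) + chiFun z2 m2 l2 (ζ i γ - (γ : ℂ)⁻¹) - linf = 0 ∧
        deriv (fun w => chiFun z1 m1 l1 w + chiFun z2 m2 l2 (w - (γ : ℂ)⁻¹) - linf)
          (ζ i γ) ≠ 0) ∧
      (∀ i : Fin M₁, ‖ζ (Sum.inl i) γ - ζ1 i‖ ≤ C * |γ|) ∧
      (∀ j : Fin M₂, ‖ζ (Sum.inr j) γ - (γ : ℂ)⁻¹ - ζ2 j‖ ≤ C * |γ|)) :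
    -- each coupled quadratic charge converges to the corresponding decoupled one …
    (∀ i : Fin M₁ ⊕ Fin M₂,
      Tendsto
        (fun γ : ℝ =>
          -(B (gamFun z1 m1 v1 (ζ i γ) + gamFun z2 m2 v2 (ζ i γ - (γ : ℂ)⁻¹))
              (gamFun z1 m1 v1 (ζ i γ) + gamFun z2 m2 v2 (ζ i γ - (γ : ℂ)⁻¹)))
            / (2 * deriv
                (fun w => chiFun z1 m1 l1 w + chiFun z2 m2 l2 (w - (γ : ℂ)⁻¹) - linf)
                (ζ i γ)))
        (𝓝[≠] (0 : ℝ))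
        (𝓝 (Sum.elim
          (fun i => -(B (gamFun z1 m1 v1 (ζ1 i)) (gamFun z1 m1 v1 (ζ1 i)))
            / (2 * deriv (fun w => chiFun z1 m1 l1 w - linf) (ζ1 i)))
          (fun j => -(B (gamFun z2 m2 v2 (ζ2 j)) (gamFun z2 m2 v2 (ζ2 j)))
            / (2 * deriv (fun w => chiFun z2 m2 l2 w - linf) (ζ2 j))) i))) ∧
    -- … and consequently any linear combination of them converges to the decoupled sum
    (∀ eps : Fin M₁ ⊕ Fin M₂ → ℂ,
      Tendsto
        (fun γ : ℝ => ∑ i : Fin M₁ ⊕ Fin M₂, eps i *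
          (-(B (gamFun z1 m1 v1 (ζ i γ) + gamFun z2 m2 v2 (ζ i γ - (γ : ℂ)⁻¹))
              (gamFun z1 m1 v1 (ζ i γ) + gamFun z2 m2 v2 (ζ i γ - (γ : ℂ)⁻¹)))
            / (2 * deriv
                (fun w => chiFun z1 m1 l1 w + chiFun z2 m2 l2 (w - (γ : ℂ)⁻¹) - linf)
                (ζ i γ))))
        (𝓝[≠] (0 : ℝ))
        (𝓝 ((∑ i : Fin M₁, eps (Sum.inl i) *
            (-(B (gamFun z1 m1 v1 (ζ1 i)) (gamFun z1 m1 v1 (ζ1 i)))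
              / (2 * deriv (fun w => chiFun z1 m1 l1 w - linf) (ζ1 i)))) +
          ∑ j : Fin M₂, eps (Sum.inr j) *
            (-(B (gamFun z2 m2 v2 (ζ2 j)) (gamFun z2 m2 v2 (ζ2 j)))
              / (2 * deriv (fun w => chiFun z2 m2 l2 w - linf) (ζ2 j)))))) := by
  set L : Filter ℝ := 𝓝[≠] (0 : ℝ)
  -- basic filter facts
  have hmemε : ∀ᶠ γ : ℝ in L, 0 < |γ| ∧ |γ| < ε := by
    have h1 : ∀ᶠ γ : ℝ in L, γ ≠ 0 := eventually_mem_nhdsWithin.mono fun γ h => h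
    have h2 : ∀ᶠ γ : ℝ in L, |γ| < ε :=
      eventually_nhdsWithin_of_eventually_nhds (by simpa using eventually_abs_sub_lt (0:ℝ) hε)
    filter_upwards [h1, h2] with γ hγ1 hγ2 using ⟨abs_pos.mpr hγ1, hγ2⟩
  have habs : Tendsto (fun γ : ℝ => |γ|) L (𝓝[>] (0:ℝ)) := by
    apply tendsto_nhdsWithin_of_tendsto_nhds_of_eventually_within
    · simpa using (continuous_abs.tendsto (0:ℝ)).mono_left nhdsWithin_le_nhds
    · exact hmemε.mono fun γ h => h.1
  have hginf : Tendsto (fun γ : ℝ => ‖((γ:ℝ):ℂ)⁻¹‖) L atTop := by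
    apply (tendsto_inv_nhdsGT_zero.comp habs).congr
    intro γ; simp [norm_inv, Real.norm_eq_abs]
  have hCγ : Tendsto (fun γ : ℝ => C * |γ|) L (𝓝 0) := by
    have := (continuous_abs.tendsto (0:ℝ)).mono_left (nhdsWithin_le_nhds (s := {(0:ℝ)}ᶜ))
    simpa using (this.const_mul C)
  -- the key pointwise convergence
  have key : ∀ i : Fin M₁ ⊕ Fin M₂,
      Tendsto
        (fun γ : ℝ =>
          -(B (gamFun z1 m1 v1 (ζ i γ) + gamFun z2 m2 v2 (ζ i γ - (γ : ℂ)⁻¹))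
              (gamFun z1 m1 v1 (ζ i γ) + gamFun z2 m2 v2 (ζ i γ - (γ : ℂ)⁻¹)))
            / (2 * deriv
                (fun w => chiFun z1 m1 l1 w + chiFun z2 m2 l2 (w - (γ : ℂ)⁻¹) - linf)
                (ζ i γ)))
        L
        (𝓝 (Sum.elim
          (fun i => -(B (gamFun z1 m1 v1 (ζ1 i)) (gamFun z1 m1 v1 (ζ1 i)))
            / (2 * deriv (fun w => chiFun z1 m1 l1 w - linf) (ζ1 i)))
          (fun j => -(B (gamFun z2 m2 v2 (ζ2 j)) (gamFun z2 m2 v2 (ζ2 j)))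
            / (2 * deriv (fun w => chiFun z2 m2 l2 w - linf) (ζ2 j))) i)) := by
    rintro (i | j)
    · -- case inl
      set u : ℝ → ℂ := fun γ => ζ (Sum.inl i) γ with hu_def
      have hu : Tendsto u L (𝓝 (ζ1 i)) := by
        have hb : ∀ᶠ γ in L, ‖u γ - ζ1 i‖ ≤ C * |γ| :=
          hmemε.mono fun γ h => (hζ γ h.1 h.2).2.2.1 i
        have h0 : Tendsto (fun γ : ℝ => u γ - ζ1 i) L (𝓝 0) := squeeze_zero_norm' hb hCγ
        simpa using h0.add_const (ζ1 i)
      have hu' : Tendsto (fun γ : ℝ => ‖u γ - ((γ:ℝ):ℂ)⁻¹‖) L atTop := by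
        have := norm_add_atTop (g := fun γ : ℝ => -((γ:ℝ):ℂ)⁻¹) hu (by simpa using hginf)
        simpa [sub_eq_add_neg] using this
      have hev1 : ∀ᶠ γ in L, ∀ a, u γ ≠ z1 a := by
        rw [eventually_all]; exact fun a => hu.eventually_ne (hζ1p i a)
      have hev2 : ∀ᶠ γ : ℝ in L, ∀ b, u γ - ((γ:ℝ):ℂ)⁻¹ ≠ z2 b := by
        rw [eventually_all]; intro b
        filter_upwards [hu'.eventually_gt_atTop ‖z2 b‖] with γ h hEq
        rw [hEq] at h; exact lt_irrefl _ h
      -- coefficients tendsto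
      have hc1 : ∀ a p, Tendsto (fun γ : ℝ => ((u γ - z1 a) ^ (p + 1))⁻¹) L
          (𝓝 (((ζ1 i - z1 a) ^ (p + 1))⁻¹)) := fun a p => tendsto_inv_pow_fin hu (hζ1p i a) _
      have hc2 : ∀ b q, Tendsto (fun γ : ℝ => ((u γ - ((γ:ℝ):ℂ)⁻¹ - z2 b) ^ (q + 1))⁻¹) L
          (𝓝 (0:ℂ)) := fun b q => tendsto_inv_pow_inf hu' (z2 b) (by omega)
      -- numerator
      have hnum : Tendsto (fun γ : ℝ =>
          B (gamFun z1 m1 v1 (u γ) + gamFun z2 m2 v2 (u γ - ((γ:ℝ):ℂ)⁻¹))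
            (gamFun z1 m1 v1 (u γ) + gamFun z2 m2 v2 (u γ - ((γ:ℝ):ℂ)⁻¹))) L
          (𝓝 (B (gamFun z1 m1 v1 (ζ1 i)) (gamFun z1 m1 v1 (ζ1 i)))) := by
        simp only [map_add, LinearMap.add_apply]
        have t11 := tendsto_B_gam_gam B z1 m1 v1 z1 m1 v1 hc1 hc1
        have t12 := tendsto_B_gam_gam B z1 m1 v1 z2 m2 v2 hc1 hc2
        have t21 := tendsto_B_gam_gam B z2 m2 v2 z1 m1 v1 hc2 hc1
        have t22 := tendsto_B_gam_gam B z2 m2 v2 z2 m2 v2 hc2 hc2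
        simp only [zero_mul, mul_zero, Finset.sum_const_zero] at t12 t21 t22
        have := (t11.add t21).add (t12.add t22)
        simp only [add_zero] at this
        rw [← B_gam_gam] at this
        exact this
      -- denominator
      have hden : Tendsto (fun γ : ℝ =>
          2 * (chiD z1 m1 l1 (u γ) + chiD z2 m2 l2 (u γ - ((γ:ℝ):ℂ)⁻¹))) L
          (𝓝 (2 * chiD z1 m1 l1 (ζ1 i))) := by
        have := (tendsto_chiD_fin z1 m1 l1 hu (hζ1p i)).add (tendsto_chiD_inf z2 m2 l2 hu')
        simpa using this.const_mul 2
      have hD : deriv (fun w => chiFun z1 m1 l1 w - linf) (ζ1 i) = chiD z1 m1 l1 (ζ1 i) :=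
        ((hasDerivAt_chiFun z1 m1 l1 (hζ1p i)).sub_const linf).deriv
      have hDne : (2:ℂ) * chiD z1 m1 l1 (ζ1 i) ≠ 0 :=
        mul_ne_zero two_ne_zero (hD ▸ hζ1s i)
      have final := hnum.neg.div hden hDne
      simp only [Sum.elim_inl, hD]
      refine Tendsto.congr' ?_ final
      filter_upwards [hev1, hev2] with γ h1 h2
      simp only [Pi.div_apply]
      rw [(hasDerivAt_coupled z1 m1 l1 z2 m2 l2 linf _ h1 h2).deriv]
    · -- case inr
      set u : ℝ → ℂ := fun γ => ζ (Sum.inr j) γ with hu_def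
      have hv : Tendsto (fun γ : ℝ => u γ - ((γ:ℝ):ℂ)⁻¹) L (𝓝 (ζ2 j)) := by
        have hb : ∀ᶠ γ in L, ‖(u γ - ((γ:ℝ):ℂ)⁻¹) - ζ2 j‖ ≤ C * |γ| :=
          hmemε.mono fun γ h => (hζ γ h.1 h.2).2.2.2 j
        have h0 : Tendsto (fun γ : ℝ => (u γ - ((γ:ℝ):ℂ)⁻¹) - ζ2 j) L (𝓝 0) :=
          squeeze_zero_norm' hb hCγ
        simpa using h0.add_const (ζ2 j)
      have hu' : Tendsto (fun γ : ℝ => ‖u γ‖) L atTop := by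
        have := norm_add_atTop (g := fun γ : ℝ => ((γ:ℝ):ℂ)⁻¹) hv hginf
        apply this.congr; intro γ; ring_nf
      have hev1 : ∀ᶠ γ in L, ∀ a, u γ ≠ z1 a := by
        rw [eventually_all]; intro a
        filter_upwards [hu'.eventually_gt_atTop ‖z1 a‖] with γ h hEq
        rw [hEq] at h; exact lt_irrefl _ h
      have hev2 : ∀ᶠ γ : ℝ in L, ∀ b, u γ - ((γ:ℝ):ℂ)⁻¹ ≠ z2 b := by
        rw [eventually_all]; exact fun b => hv.eventually_ne (hζ2p j b)
      have hc1 : ∀ a p, Tendsto (fun γ : ℝ => ((u γ - z1 a) ^ (p + 1))⁻¹) L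
          (𝓝 (0:ℂ)) := fun a p => tendsto_inv_pow_inf hu' (z1 a) (by omega)
      have hc2 : ∀ b q, Tendsto (fun γ : ℝ => ((u γ - ((γ:ℝ):ℂ)⁻¹ - z2 b) ^ (q + 1))⁻¹) L
          (𝓝 (((ζ2 j - z2 b) ^ (q + 1))⁻¹)) := fun b q => tendsto_inv_pow_fin hv (hζ2p j b) _
      have hnum : Tendsto (fun γ : ℝ =>
          B (gamFun z1 m1 v1 (u γ) + gamFun z2 m2 v2 (u γ - ((γ:ℝ):ℂ)⁻¹))
            (gamFun z1 m1 v1 (u γ) + gamFun z2 m2 v2 (u γ - ((γ:ℝ):ℂ)⁻¹))) L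
          (𝓝 (B (gamFun z2 m2 v2 (ζ2 j)) (gamFun z2 m2 v2 (ζ2 j)))) := by
        simp only [map_add, LinearMap.add_apply]
        have t11 := tendsto_B_gam_gam B z1 m1 v1 z1 m1 v1 hc1 hc1
        have t12 := tendsto_B_gam_gam B z1 m1 v1 z2 m2 v2 hc1 hc2
        have t21 := tendsto_B_gam_gam B z2 m2 v2 z1 m1 v1 hc2 hc1
        have t22 := tendsto_B_gam_gam B z2 m2 v2 z2 m2 v2 hc2 hc2
        simp only [zero_mul, mul_zero, Finset.sum_const_zero] at t11 t12 t21
        have := (t11.add t21).add (t12.add t22)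
        simp only [add_zero, zero_add] at this
        rw [← B_gam_gam] at this
        exact this
      have hden : Tendsto (fun γ : ℝ =>
          2 * (chiD z1 m1 l1 (u γ) + chiD z2 m2 l2 (u γ - ((γ:ℝ):ℂ)⁻¹))) L
          (𝓝 (2 * chiD z2 m2 l2 (ζ2 j))) := by
        have := (tendsto_chiD_inf z1 m1 l1 hu').add (tendsto_chiD_fin z2 m2 l2 hv (hζ2p j))
        simpa using this.const_mul 2
      have hD : deriv (fun w => chiFun z2 m2 l2 w - linf) (ζ2 j) = chiD z2 m2 l2 (ζ2 j) :=
        ((hasDerivAt_chiFun z2 m2 l2 (hζ2p j)).sub_const linf).deriv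
      have hDne : (2:ℂ) * chiD z2 m2 l2 (ζ2 j) ≠ 0 :=
        mul_ne_zero two_ne_zero (hD ▸ hζ2s j)
      have final := hnum.neg.div hden hDne
      simp only [Sum.elim_inr, hD]
      refine Tendsto.congr' ?_ final
      filter_upwards [hev1, hev2] with γ h1 h2
      simp only [Pi.div_apply]
      rw [(hasDerivAt_coupled z1 m1 l1 z2 m2 l2 linf _ h1 h2).deriv]
  refine ⟨key, fun eps => ?_⟩
  have := tendsto_finset_sum Finset.univ (fun i (_ : i ∈ Finset.univ) => (key i).const_mul (eps i))
  have heq : (∑ i : Fin M₁ ⊕ Fin M₂, eps i * (Sum.elim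
          (fun i => -(B (gamFun z1 m1 v1 (ζ1 i)) (gamFun z1 m1 v1 (ζ1 i)))
            / (2 * deriv (fun w => chiFun z1 m1 l1 w - linf) (ζ1 i)))
          (fun j => -(B (gamFun z2 m2 v2 (ζ2 j)) (gamFun z2 m2 v2 (ζ2 j)))
            / (2 * deriv (fun w => chiFun z2 m2 l2 w - linf) (ζ2 j))) i)) =
      ((∑ i : Fin M₁, eps (Sum.inl i) *
            (-(B (gamFun z1 m1 v1 (ζ1 i)) (gamFun z1 m1 v1 (ζ1 i)))
              / (2 * deriv (fun w => chiFun z1 m1 l1 w - linf) (ζ1 i)))) +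
          ∑ j : Fin M₂, eps (Sum.inr j) *
            (-(B (gamFun z2 m2 v2 (ζ2 j)) (gamFun z2 m2 v2 (ζ2 j)))
              / (2 * deriv (fun w => chiFun z2 m2 l2 w - linf) (ζ2 j)))) := by
    rw [Fintype.sum_sum_type]
    simp only [Sum.elim_inl, Sum.elim_inr]
  rw [← heq]
  exact this
end

section
/- Residue identity underlying Proposition 2.1 (momentum equals the sum of the quadratic charges). Assume ℓ^∞ ≠ 0 and that the twist function φ has M := Σ_{α∈Σ} m_α pairwise distinct simple zeros ζ_1, …, ζ_M (which are then automatically distinct from the poles z_α). Then Σ_{α∈Σ} D^α_0 = − Σ_{i=1}^M B(Γ(ζ_i), Γ(ζ_i))/(2 φ'(ζ_i)). (Equivalently: the rational 1-form Q(z) dz, with Q(z) = −B(Γ(z),Γ(z))/(2φ(z)), is regular at z = ∞, its residue at ζ_i equals −B(Γ(ζ_i),Γ(ζ_i))/(2φ'(ζ_i)), its residue at z_α equals −D^α_0, and the sum of all its residues vanishes.) -/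
open scoped BigOperators Topology
open Filter

/-- The generalised Segal–Sugawara quantity
`D^α_p = (1/2) Σ_{q,r, q+r ≥ p} κ^α_{q+r-p} B(v^α_q, v^α_r)`. -/
noncomputable def ssInt {n : ℕ} {V : Type*} [AddCommGroup V] [Module ℂ V]
    (B : V →ₗ[ℂ] V →ₗ[ℂ] ℂ) (m : Fin n → ℕ) (κ : Fin n → ℕ → ℂ)
    (v : Fin n → ℕ → V) (a : Fin n) (p : ℕ) : ℂ :=
  (1 / 2) * ∑ q ∈ Finset.range (m a + 1), ∑ r ∈ Finset.range (m a + 1),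
    if p ≤ q + r then κ a (q + r - p) * B (v a q) (v a r) else 0

namespace GaudinAux
open Polynomial Finset

/-- coefficient of `(X - z)^s * H` at `s + k` is `H.coeff k` when `natDegree H ≤ k`. -/
lemma coeff_pow_mul (zz : ℂ) (s k : ℕ) (H : ℂ[X]) (hH : H.natDegree ≤ k) :
    ((X - C zz) ^ s * H).coeff (s + k) = H.coeff k := by
  induction s with
  | zero => simp
  | succ s ih =>
    have h1 : (X - C zz) ^ (s + 1) * H = ((X - C zz) ^ s * H) * (X - C zz) := by ring
    have hdeg : ((X - C zz) ^ s * H).natDegree ≤ s + k := by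
      refine le_trans (natDegree_mul_le) ?_
      have : ((X - C zz) ^ s).natDegree ≤ s := by
        simpa using natDegree_pow_le (p := X - C zz) (n := s)
      omega
    have h2 : (s + 1 + k) = (s + k) + 1 := by omega
    rw [h1, h2, coeff_mul_X_sub_C, ih]
    have : ((X - C zz) ^ s * H).coeff (s + k + 1) = 0 :=
      coeff_eq_zero_of_natDegree_lt (by omega)
    rw [this]; ring

lemma lagrange_coeff_sum {M : ℕ} (ζ : Fin M → ℂ) (hinj : Function.Injective ζ)
    (F : ℂ[X]) (hdeg : F.degree < (M : ℕ)) :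
    F.coeff (M - 1) = ∑ i, F.eval (ζ i) * (∏ j ∈ univ.erase i, (ζ i - ζ j))⁻¹ := by
  classical
  have hcard : (#(univ : Finset (Fin M)) : WithBot ℕ) = (M : ℕ) := by simp
  have h := Lagrange.eq_interpolate (s := (univ : Finset (Fin M))) (v := ζ)
    (hinj.injOn) (by rw [hcard]; exact hdeg)
  conv_lhs => rw [h]
  rw [Lagrange.interpolate_apply, finset_sum_coeff]
  refine Finset.sum_congr rfl fun i _ => ?_
  rw [coeff_C_mul]
  congr 1
  have hb : Lagrange.basis univ ζ i
      = C (∏ j ∈ univ.erase i, (ζ i - ζ j)⁻¹) * ∏ j ∈ univ.erase i, (X - C (ζ j)) := by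
    rw [Lagrange.basis]
    simp_rw [Lagrange.basisDivisor]
    rw [Finset.prod_mul_distrib, map_prod]
  have hmon : (∏ j ∈ univ.erase i, (X - C (ζ j))).Monic :=
    monic_prod_of_monic _ _ fun j _ => monic_X_sub_C _
  have hnd : (∏ j ∈ univ.erase i, (X - C (ζ j))).natDegree = M - 1 := by
    rw [natDegree_prod_of_monic _ _ fun j _ => monic_X_sub_C _]
    simp [Finset.card_erase_of_mem]
  rw [hb, coeff_C_mul, ← hnd, hmon.coeff_natDegree, mul_one, ← Finset.prod_inv_distrib]

lemma sum_eval_div_deriv {M : ℕ} (ζ : Fin M → ℂ) (hinj : Function.Injective ζ)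
    (c : ℂ) (P F : ℂ[X])
    (hP : P = C c * ∏ i, (X - C (ζ i))) (hdeg : F.degree < (M : ℕ)) :
    ∑ i, F.eval (ζ i) / P.derivative.eval (ζ i) = F.coeff (M - 1) / c := by
  classical
  have hder : ∀ i, P.derivative.eval (ζ i) = c * ∏ j ∈ univ.erase i, (ζ i - ζ j) := by
    intro i
    have hsplit : (∏ k : Fin M, (X - C (ζ k)))
        = (X - C (ζ i)) * ∏ j ∈ univ.erase i, (X - C (ζ j)) :=
      (Finset.mul_prod_erase univ _ (mem_univ i)).symm
    rw [hP, hsplit, derivative_mul, derivative_C, zero_mul, zero_add, derivative_mul,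
      derivative_sub, derivative_X, derivative_C, sub_zero, one_mul]
    simp [eval_prod]
  rw [lagrange_coeff_sum ζ hinj F hdeg, Finset.sum_div]
  refine Finset.sum_congr rfl fun i _ => ?_
  rw [hder i, mul_comm, div_mul_eq_div_div,
    div_eq_mul_inv _ (∏ j ∈ univ.erase i, (ζ i - ζ j))]

variable {n : ℕ}

noncomputable def Dp (z : Fin n → ℂ) (m : Fin n → ℕ) : ℂ[X] :=
  ∏ c, (X - C (z c)) ^ (m c + 1)

noncomputable def Gp (z : Fin n → ℂ) (m : Fin n → ℕ) (a : Fin n) : ℂ[X] :=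
  ∏ c ∈ univ.erase a, (X - C (z c)) ^ (m c + 1)

noncomputable def Ap (z : Fin n → ℂ) (m : Fin n → ℕ) (l : Fin n → ℕ → ℂ) (a : Fin n) : ℂ[X] :=
  ∑ j ∈ range (m a + 1), C (l a (m a - j)) * (X - C (z a)) ^ j

noncomputable def Pp (z : Fin n → ℂ) (m : Fin n → ℕ) (l : Fin n → ℕ → ℂ) (linf : ℂ) : ℂ[X] :=
  (∑ c, ∑ p ∈ range (m c + 1), C (l c p) * ((X - C (z c)) ^ (m c - p) * Gp z m c))
    - C linf * Dp z m

noncomputable def Rp (z : Fin n → ℂ) (m : Fin n → ℕ) (l : Fin n → ℕ → ℂ) (linf : ℂ)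
    (a : Fin n) : ℂ[X] :=
  (∑ c ∈ univ.erase a, ∑ p ∈ range (m c + 1),
      C (l c p) * ((X - C (z c)) ^ (m c - p)
        * ∏ c' ∈ (univ.erase a).erase c, (X - C (z c')) ^ (m c' + 1)))
    - C linf * Gp z m a

noncomputable def Kp (z : Fin n → ℂ) (m : Fin n → ℕ) (κ : Fin n → ℕ → ℂ) (a : Fin n) : ℂ[X] :=
  ∑ t ∈ range (m a + 1), C (κ a (m a + t)) * (X - C (z a)) ^ t

variable (z : Fin n → ℂ) (m : Fin n → ℕ) (l : Fin n → ℕ → ℂ) (linf : ℂ) (κ : Fin n → ℕ → ℂ)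

lemma Dp_eq' (a : Fin n) : Dp z m = (X - C (z a)) ^ (m a + 1) * Gp z m a :=
  (Finset.mul_prod_erase univ _ (mem_univ a)).symm

lemma Gp_monic (a : Fin n) : (Gp z m a).Monic :=
  monic_prod_of_monic _ _ fun _ _ => (monic_X_sub_C _).pow _

lemma Dp_monic : (Dp z m).Monic :=
  monic_prod_of_monic _ _ fun _ _ => (monic_X_sub_C _).pow _

lemma Gp_natDegree (a : Fin n) : (Gp z m a).natDegree = ∑ c ∈ univ.erase a, (m c + 1) := by
  rw [Gp, natDegree_prod_of_monic _ _ fun c _ => (monic_X_sub_C _).pow _]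
  exact Finset.sum_congr rfl fun c _ => by rw [natDegree_pow, natDegree_X_sub_C, mul_one]

lemma Dp_natDegree : (Dp z m).natDegree = ∑ c, (m c + 1) := by
  rw [Dp, natDegree_prod_of_monic _ _ fun c _ => (monic_X_sub_C _).pow _]
  exact Finset.sum_congr rfl fun c _ => by rw [natDegree_pow, natDegree_X_sub_C, mul_one]

lemma Ap_eq (a : Fin n) :
    Ap z m l a = ∑ p ∈ range (m a + 1), C (l a p) * (X - C (z a)) ^ (m a - p) := by
  rw [Ap]
  conv_rhs => rw [← Finset.sum_range_reflect]
  refine Finset.sum_congr rfl fun j hj => ?_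
  have hj' : j ≤ m a := Nat.lt_succ_iff.1 (mem_range.1 hj)
  have h1 : m a + 1 - 1 - j = m a - j := by omega
  have h2 : m a - (m a - j) = j := by omega
  rw [h1, h2]

lemma Pp_decomp (a : Fin n) :
    Pp z m l linf = Ap z m l a * Gp z m a + (X - C (z a)) ^ (m a + 1) * Rp z m l linf a := by
  have hG : ∀ c ∈ univ.erase a, Gp z m c
      = (X - C (z a)) ^ (m a + 1)
        * ∏ c' ∈ (univ.erase a).erase c, (X - C (z c')) ^ (m c' + 1) := by
    intro c hc
    have ha : a ∈ univ.erase c := mem_erase.2 ⟨fun h => (mem_erase.1 hc).1 h.symm, mem_univ a⟩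
    rw [Gp, ← Finset.mul_prod_erase _ _ ha, Finset.erase_right_comm]
  have h1 : ∑ p ∈ range (m a + 1), C (l a p) * ((X - C (z a)) ^ (m a - p) * Gp z m a)
      = Ap z m l a * Gp z m a := by
    rw [Ap_eq, Finset.sum_mul]
    exact Finset.sum_congr rfl fun p _ => by ring
  have h2 : ∑ c ∈ univ.erase a, ∑ p ∈ range (m c + 1),
        C (l c p) * ((X - C (z c)) ^ (m c - p) * Gp z m c)
      = (X - C (z a)) ^ (m a + 1) * ∑ c ∈ univ.erase a, ∑ p ∈ range (m c + 1),
          C (l c p) * ((X - C (z c)) ^ (m c - p)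
            * ∏ c' ∈ (univ.erase a).erase c, (X - C (z c')) ^ (m c' + 1)) := by
    rw [Finset.mul_sum]
    refine Finset.sum_congr rfl fun c hc => ?_
    rw [Finset.mul_sum]
    refine Finset.sum_congr rfl fun p _ => ?_
    rw [hG c hc]; ring
  rw [Pp, ← Finset.add_sum_erase _ _ (mem_univ a), h1, h2, Dp_eq' z m a, Rp]
  ring

lemma Pp_natDegree_le {M : ℕ} (hM : M = ∑ c, (m c + 1)) :
    (Pp z m l linf).natDegree ≤ M := by
  rw [Pp]
  refine le_trans (natDegree_sub_le _ _) (max_le ?_ ?_)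
  · refine natDegree_sum_le_of_forall_le _ _ fun c _ => ?_
    refine natDegree_sum_le_of_forall_le _ _ fun p _ => ?_
    refine le_trans natDegree_mul_le ?_
    rw [natDegree_C]
    refine le_trans (by omega : 0 + ((X - C (z c)) ^ (m c - p) * Gp z m c).natDegree
      ≤ ((X - C (z c)) ^ (m c - p) * Gp z m c).natDegree) ?_
    refine le_trans natDegree_mul_le ?_
    have hp : ((X - C (z c)) ^ (m c - p)).natDegree ≤ m c := by
      rw [natDegree_pow, natDegree_X_sub_C, mul_one]; omega
    have hg : (Gp z m c).natDegree = ∑ c' ∈ univ.erase c, (m c' + 1) := Gp_natDegree z m c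
    have hsum : (m c + 1) + ∑ c' ∈ univ.erase c, (m c' + 1) = M := by
      rw [hM]; exact Finset.add_sum_erase univ (fun c => m c + 1) (mem_univ c)
    omega
  · refine le_trans natDegree_mul_le ?_
    rw [natDegree_C, Dp_natDegree, hM]; omega

lemma Pp_coeff_top {M : ℕ} (hM : M = ∑ c, (m c + 1)) :
    (Pp z m l linf).coeff M = -linf := by
  rw [Pp, coeff_sub]
  have h1 : (∑ c, ∑ p ∈ range (m c + 1),
      C (l c p) * ((X - C (z c)) ^ (m c - p) * Gp z m c)).coeff M = 0 := by
    rcases isEmpty_or_nonempty (Fin n) with h0 | hne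
    · simp
    apply coeff_eq_zero_of_natDegree_lt
    have : ∀ c ∈ (univ : Finset (Fin n)), (∑ p ∈ range (m c + 1),
        C (l c p) * ((X - C (z c)) ^ (m c - p) * Gp z m c)).natDegree ≤ M - 1 := by
      intro c _
      refine natDegree_sum_le_of_forall_le _ _ fun p _ => ?_
      refine le_trans natDegree_mul_le ?_
      rw [natDegree_C]
      have hp : ((X - C (z c)) ^ (m c - p)).natDegree ≤ m c := by
        rw [natDegree_pow, natDegree_X_sub_C, mul_one]; omega
      have hg : (Gp z m c).natDegree = ∑ c' ∈ univ.erase c, (m c' + 1) := Gp_natDegree z m c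
      have hmul := natDegree_mul_le (p := (X - C (z c)) ^ (m c - p)) (q := Gp z m c)
      have hsum : (m c + 1) + ∑ c' ∈ univ.erase c, (m c' + 1) = M := by
        rw [hM]; exact Finset.add_sum_erase univ (fun c => m c + 1) (mem_univ c)
      omega
    have hle := natDegree_sum_le_of_forall_le univ _ this
    obtain ⟨c0⟩ := hne
    have hM1 : 1 ≤ M := by
      rw [hM]
      calc 1 ≤ m c0 + 1 := by omega
      _ ≤ ∑ c, (m c + 1) :=
        Finset.single_le_sum (f := fun c => m c + 1) (fun i _ => by omega) (mem_univ c0)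
    omega
  rw [h1, coeff_C_mul]
  have h2 : (Dp z m).coeff M = 1 := by
    have := (Dp_monic z m).coeff_natDegree
    rwa [Dp_natDegree, ← hM] at this
  rw [h2]
  ring

lemma Pp_eval (w : ℂ) (hw : ∀ c, w ≠ z c) :
    (Pp z m l linf).eval w = (Dp z m).eval w * (chiFun z m l w - linf) := by
  rw [Pp, chiFun, eval_sub, eval_mul, eval_C, mul_sub, eval_finset_sum, Finset.mul_sum]
  congr 1
  · refine Finset.sum_congr rfl fun c _ => ?_
    rw [eval_finset_sum, Finset.mul_sum]
    refine Finset.sum_congr rfl fun p hp => ?_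
    have hp' : p ≤ m c := Nat.lt_succ_iff.1 (mem_range.1 hp)
    have hwc : w - z c ≠ 0 := sub_ne_zero.2 (hw c)
    rw [eval_mul, eval_C, eval_mul, eval_pow, eval_sub, eval_X, eval_C]
    have hD : (Dp z m).eval w = (w - z c) ^ (m c + 1) * (Gp z m c).eval w := by
      rw [Dp_eq' z m c, eval_mul, eval_pow, eval_sub, eval_X, eval_C]
    rw [hD]
    have hpow : (w - z c) ^ (m c + 1) = (w - z c) ^ (p + 1) * (w - z c) ^ (m c - p) := by
      rw [← pow_add]; congr 1; omega
    rw [hpow]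
    field_simp
  · ring

lemma kappa_zero (hl : ∀ a, l a (m a) ≠ 0)
    (hκ : ∀ a, ∀ q r : ℕ, q ≤ m a → r ≤ m a →
      ∑ p ∈ Finset.range (m a + 1 - r), κ a (p + q) * l a (p + r)
        = if q = r then 1 else 0)
    (a : Fin n) (t : ℕ) (ht : t < m a) : κ a t = 0 := by
  have h := hκ a t (m a) (le_of_lt ht) le_rfl
  have h1 : m a + 1 - m a = 1 := by omega
  rw [h1, Finset.sum_range_one] at h
  simp only [zero_add, if_neg (by omega : ¬ t = m a)] at h
  exact (mul_eq_zero.1 h).resolve_right (hl a)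

lemma dvd_of_comp (zz : ℂ) (N : ℕ) (f : ℂ[X])
    (h : X ^ N ∣ f.comp (X + C zz)) : (X - C zz) ^ N ∣ f := by
  obtain ⟨g, hg⟩ := h
  refine ⟨g.comp (X - C zz), ?_⟩
  have hf : f = (f.comp (X + C zz)).comp (X - C zz) := by
    rw [comp_assoc, add_comp, X_comp, C_comp]
    simp
  rw [hf, hg, mul_comp, pow_comp, X_comp]

lemma KA_dvd (hκ : ∀ a, ∀ q r : ℕ, q ≤ m a → r ≤ m a →
      ∑ p ∈ Finset.range (m a + 1 - r), κ a (p + q) * l a (p + r)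
        = if q = r then 1 else 0)
    (a : Fin n) :
    (X - C (z a)) ^ (m a + 1) ∣ (Kp z m κ a * Ap z m l a - 1) := by
  apply dvd_of_comp
  rw [sub_comp, mul_comp, one_comp]
  have hK : (Kp z m κ a).comp (X + C (z a))
      = ∑ t ∈ range (m a + 1), C (κ a (m a + t)) * X ^ t := by
    rw [Kp]
    simp [eval₂_finset_sum, mul_comp, pow_comp, sub_comp, add_comp, X_comp, C_comp,
      Polynomial.eval₂_finset_sum]
  have hA : (Ap z m l a).comp (X + C (z a))
      = ∑ j ∈ range (m a + 1), C (l a (m a - j)) * X ^ j := by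
    rw [Ap]
    simp [mul_comp, pow_comp, sub_comp, add_comp, X_comp, C_comp, eval₂_finset_sum]
  rw [hK, hA, X_pow_dvd_iff]
  intro d hd
  have hd' : d ≤ m a := Nat.lt_succ_iff.1 hd
  have hcK : ∀ k, (∑ t ∈ range (m a + 1), C (κ a (m a + t)) * X ^ t).coeff k
      = if k ≤ m a then κ a (m a + k) else 0 := by
    intro k
    rw [finset_sum_coeff]
    simp only [coeff_C_mul, coeff_X_pow, mul_ite, mul_one, mul_zero]
    rw [Finset.sum_ite_eq (range (m a + 1)) k (fun t => κ a (m a + t))]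
    simp [Nat.lt_succ_iff]
  have hcA : ∀ k, (∑ j ∈ range (m a + 1), C (l a (m a - j)) * X ^ j).coeff k
      = if k ≤ m a then l a (m a - k) else 0 := by
    intro k
    rw [finset_sum_coeff]
    simp only [coeff_C_mul, coeff_X_pow, mul_ite, mul_one, mul_zero]
    rw [Finset.sum_ite_eq (range (m a + 1)) k (fun j => l a (m a - j))]
    simp [Nat.lt_succ_iff]
  rw [coeff_sub, coeff_mul, Finset.Nat.sum_antidiagonal_eq_sum_range_succ_mk]
  have hsum : ∑ k ∈ range (d + 1),
        (∑ t ∈ range (m a + 1), C (κ a (m a + t)) * X ^ t).coeff k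
          * (∑ j ∈ range (m a + 1), C (l a (m a - j)) * X ^ j).coeff (d - k)
      = ∑ p ∈ range (m a + 1 - (m a - d)), κ a (p + m a) * l a (p + (m a - d)) := by
    have hrange : m a + 1 - (m a - d) = d + 1 := by omega
    rw [hrange]
    refine Finset.sum_congr rfl fun k hk => ?_
    have hk' : k ≤ d := Nat.lt_succ_iff.1 (mem_range.1 hk)
    rw [hcK, hcA, if_pos (by omega : k ≤ m a), if_pos (by omega : d - k ≤ m a)]
    have h1 : m a + k = k + m a := by omega
    have h2 : m a - (d - k) = k + (m a - d) := by omega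
    rw [h1, h2]
  rw [hsum, hκ a (m a) (m a - d) le_rfl (by omega), coeff_one]
  split_ifs with h1 h2
  · ring
  · exact absurd (by omega : d = 0) h2
  · exact absurd (by omega : m a = m a - d) h1
  · ring

lemma Dp_eval_ne (w : ℂ) (hw : ∀ c, w ≠ z c) : (Dp z m).eval w ≠ 0 := by
  rw [Dp, eval_prod]
  exact Finset.prod_ne_zero_iff.2 fun c _ => by
    rw [eval_pow, eval_sub, eval_X, eval_C]
    exact pow_ne_zero _ (sub_ne_zero.2 (hw c))

lemma Pp_fact {M : ℕ} (hM : M = ∑ c, (m c + 1))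
    (ζ : Fin M → ℂ) (hζinj : Function.Injective ζ)
    (hroot : ∀ i, (Pp z m l linf).eval (ζ i) = 0) :
    Pp z m l linf = C (-linf) * ∏ i, (X - C (ζ i)) := by
  classical
  set Q := Pp z m l linf - C (-linf) * ∏ i, (X - C (ζ i)) with hQ
  have hpm : (∏ i : Fin M, (X - C (ζ i))).Monic :=
    monic_prod_of_monic _ _ fun i _ => monic_X_sub_C _
  have hpn : (∏ i : Fin M, (X - C (ζ i))).natDegree = M := by
    rw [natDegree_prod_of_monic _ _ fun i _ => monic_X_sub_C _]
    simp
  have hnd : Q.natDegree ≤ M := by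
    refine le_trans (natDegree_sub_le _ _) (max_le (Pp_natDegree_le z m l linf hM) ?_)
    refine le_trans natDegree_mul_le ?_
    rw [natDegree_C, hpn]; omega
  have hco : Q.coeff M = 0 := by
    have hc1 := hpm.coeff_natDegree
    rw [hpn] at hc1
    rw [hQ, coeff_sub, Pp_coeff_top z m l linf hM, coeff_C_mul, hc1]
    ring
  have hQ0 : Q = 0 := by
    by_contra h
    have hndM : Q.natDegree ≠ M := by
      intro he
      exact h (leadingCoeff_eq_zero.1 (by rw [leadingCoeff, he, hco]))
    refine h (Polynomial.eq_zero_of_natDegree_lt_card_of_eval_eq_zero Q hζinj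
      (fun i => ?_) (by rw [Fintype.card_fin]; omega))
    rw [hQ, eval_sub, eval_mul, eval_C, hroot i, eval_prod,
      Finset.prod_eq_zero (mem_univ i) (by simp)]
    ring
  exact sub_eq_zero.1 hQ0

lemma deriv_chi (w : ℂ) (hw : ∀ c, w ≠ z c)
    (hroot : (Pp z m l linf).eval w = 0) :
    deriv (fun x => chiFun z m l x - linf) w
      = (Pp z m l linf).derivative.eval w / (Dp z m).eval w := by
  have hD : (Dp z m).eval w ≠ 0 := Dp_eval_ne z m w hw
  have hUopen : IsOpen ((Set.range z)ᶜ : Set ℂ) :=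
    (Set.finite_range z).isClosed.isOpen_compl
  have hwU : w ∈ ((Set.range z)ᶜ : Set ℂ) := by
    simp only [Set.mem_compl_iff, Set.mem_range, not_exists]
    exact fun c hc => hw c hc.symm
  have hev : (fun x => chiFun z m l x - linf)
      =ᶠ[nhds w] fun x => (Pp z m l linf).eval x / (Dp z m).eval x := by
    filter_upwards [hUopen.mem_nhds hwU] with x hx
    have hx' : ∀ c, x ≠ z c := by
      simp only [Set.mem_compl_iff, Set.mem_range, not_exists] at hx
      exact fun c hc => hx c hc.symm
    have hDx : (Dp z m).eval x ≠ 0 := Dp_eval_ne z m x hx'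
    rw [eq_div_iff hDx, Pp_eval z m l linf x hx']
    ring
  have hdP : DifferentiableAt ℂ (fun x => eval x (Pp z m l linf)) w :=
    (Pp z m l linf).differentiableAt
  have hdD : DifferentiableAt ℂ (fun x => eval x (Dp z m)) w :=
    (Dp z m).differentiableAt
  rw [hev.deriv_eq, deriv_fun_div hdP hdD hD, Polynomial.deriv, Polynomial.deriv, hroot]
  field_simp
  ring

end GaudinAux

section MainTheorem
open Polynomial Finset GaudinAux

/-- **Residue identity underlying Proposition 2.1** (momentum equals the sum of the quadratic
charges):  if `ℓ^∞ ≠ 0` and the twist function `φ` has `M = Σ_α m_α` pairwise distinct simple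
zeros `ζ_1, …, ζ_M`, then `Σ_α D^α_0 = -Σ_i B(Γ(ζ_i), Γ(ζ_i))/(2 φ'(ζ_i))`. -/
theorem momentum_eq_sum_of_quadratic_charges
    {n M : ℕ} {V : Type*} [AddCommGroup V] [Module ℂ V]
    (B : V →ₗ[ℂ] V →ₗ[ℂ] ℂ) (hB : ∀ x y, B x y = B y x)
    (z : Fin n → ℂ) (m : Fin n → ℕ) (l : Fin n → ℕ → ℂ)
    (linf : ℂ) (hlinf : linf ≠ 0)
    (hz : Function.Injective z)
    (hl : ∀ a, l a (m a) ≠ 0)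
    -- the coefficients `κ^α_p`, characterised by the linear system (2.8) of the paper
    (κ : Fin n → ℕ → ℂ)
    (hκ : ∀ a, ∀ q r : ℕ, q ≤ m a → r ≤ m a →
      ∑ p ∈ Finset.range (m a + 1 - r), κ a (p + q) * l a (p + r)
        = if q = r then 1 else 0)
    (v : Fin n → ℕ → V)
    (hM : M = ∑ a, (m a + 1))
    (ζ : Fin M → ℂ) (hζinj : Function.Injective ζ)
    (hζp : ∀ i a, ζ i ≠ z a)
    (hζ0 : ∀ i, chiFun z m l (ζ i) - linf = 0)
    (hζs : ∀ i, deriv (fun w => chiFun z m l w - linf) (ζ i) ≠ 0) :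
    ∑ a, ssInt B m κ v a 0
      = -∑ i, B (gamFun z m v (ζ i)) (gamFun z m v (ζ i))
          / (2 * deriv (fun w => chiFun z m l w - linf) (ζ i)) := by
  classical
  have hroot : ∀ i, (Pp z m l linf).eval (ζ i) = 0 := fun i => by
    rw [Pp_eval z m l linf (ζ i) (hζp i), hζ0 i, mul_zero]
  have hfact := Pp_fact z m l linf hM ζ hζinj hroot
  have hderiv : ∀ i, deriv (fun w => chiFun z m l w - linf) (ζ i)
      = (Pp z m l linf).derivative.eval (ζ i) / (Dp z m).eval (ζ i) :=
    fun i => deriv_chi z m l linf (ζ i) (hζp i) (hroot i)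
  have hDne : ∀ i, (Dp z m).eval (ζ i) ≠ 0 := fun i => Dp_eval_ne z m (ζ i) (hζp i)
  have hPder : ∀ i, (Pp z m l linf).derivative.eval (ζ i) ≠ 0 := by
    intro i h
    exact hζs i (by rw [hderiv i, h, zero_div])
  -- the core: evaluate weighted residue sums via a polynomial F
  have core : ∀ (a b : Fin n) (q r : ℕ) (F : ℂ[X]), F.degree < (M : ℕ) →
      (∀ i, F.eval (ζ i) * ((ζ i - z a) ^ (q + 1) * (ζ i - z b) ^ (r + 1))
        = (Dp z m).eval (ζ i)) →
      ∑ i, (((ζ i - z a) ^ (q + 1))⁻¹ * ((ζ i - z b) ^ (r + 1))⁻¹)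
          / deriv (fun w => chiFun z m l w - linf) (ζ i)
        = F.coeff (M - 1) / (-linf) := by
    intro a b q r F hdeg hF
    rw [← sum_eval_div_deriv ζ hζinj (-linf) _ F hfact hdeg]
    refine Finset.sum_congr rfl fun i _ => ?_
    have hza : (ζ i - z a) ^ (q + 1) ≠ 0 := pow_ne_zero _ (sub_ne_zero.2 (hζp i a))
    have hzb : (ζ i - z b) ^ (r + 1) ≠ 0 := pow_ne_zero _ (sub_ne_zero.2 (hζp i b))
    rw [hderiv i]
    rw [div_div_eq_mul_div]
    rw [div_eq_div_iff (hPder i) (hPder i)]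
    have hFe : F.eval (ζ i)
        = (Dp z m).eval (ζ i) * (((ζ i - z a) ^ (q + 1))⁻¹ * ((ζ i - z b) ^ (r + 1))⁻¹) := by
      rw [← hF i]
      field_simp
    rw [hFe]
    ring
  have MAIN : ∀ (a b : Fin n) (q r : ℕ), q ≤ m a → r ≤ m b →
      ∑ i, (((ζ i - z a) ^ (q + 1))⁻¹ * ((ζ i - z b) ^ (r + 1))⁻¹)
          / deriv (fun w => chiFun z m l w - linf) (ζ i)
        = -(if a = b then κ a (q + r) else 0) := by
    intro a b q r hq hr
    by_cases hab : a = b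
    · subst hab
      rw [if_pos rfl]
      by_cases hcase : q + r < m a
      · -- small case: κ vanishes, polynomial F of low degree
        have hsum : (m a + 1) + ∑ c' ∈ univ.erase a, (m c' + 1) = M := by
          rw [hM]; exact Finset.add_sum_erase univ (fun c => m c + 1) (mem_univ a)
        set F : ℂ[X] := (X - C (z a)) ^ (m a - 1 - (q + r)) * Gp z m a with hFdef
        have hndF : F.natDegree ≤ M - 2 - (q + r) + (q + r) := by
          refine le_trans natDegree_mul_le ?_
          rw [natDegree_pow, natDegree_X_sub_C, mul_one, Gp_natDegree]
          omega
        have hdeg : F.degree < (M : ℕ) := by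
          refine lt_of_le_of_lt degree_le_natDegree ?_
          exact_mod_cast (by omega : F.natDegree < M)
        have hco : F.coeff (M - 1) = 0 := coeff_eq_zero_of_natDegree_lt (by omega)
        rw [core a a q r F hdeg ?_, hco, zero_div,
          kappa_zero m l κ hl hκ a (q + r) hcase, neg_zero]
        intro i
        rw [hFdef, eval_mul, eval_pow, eval_sub, eval_X, eval_C, Dp_eq' z m a,
          eval_mul, eval_pow, eval_sub, eval_X, eval_C]
        have e1 : (ζ i - z a) ^ (m a - 1 - (q + r)) * ((ζ i - z a) ^ (q + 1)
            * (ζ i - z a) ^ (r + 1)) = (ζ i - z a) ^ (m a + 1) := by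
          rw [← pow_add, ← pow_add]; congr 1; omega
        linear_combination (eval (ζ i) (Gp z m a)) * e1
      · -- large case
        push_neg at hcase
        set s : ℕ := q + r + 1 - m a with hs
        have hs1 : 1 ≤ s := by omega
        have hs2 : s ≤ m a + 1 := by omega
        have hsum : (m a + 1) + ∑ c' ∈ univ.erase a, (m c' + 1) = M := by
          rw [hM]; exact Finset.add_sum_erase univ (fun c => m c + 1) (mem_univ a)
        have hM1 : 1 ≤ M := by omega
        set u : ℂ[X] := X - C (z a) with hu
        set T : ℂ[X] := ∑ t ∈ range (m a + 1 - s), C (κ a (m a + (s + t))) * u ^ t with hT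
        set Kc : ℂ[X] := ∑ t ∈ range s, C (κ a (m a + t)) * u ^ t with hKc
        have hsplit : Kp z m κ a = Kc + u ^ s * T := by
          have h0 : ∀ e : ℕ, m a + 1 = s + e →
              (∑ t ∈ range (m a + 1), C (κ a (m a + t)) * u ^ t)
                = (∑ t ∈ range s, C (κ a (m a + t)) * u ^ t)
                  + u ^ s * ∑ t ∈ range e, C (κ a (m a + (s + t))) * u ^ t := by
            intro e he
            rw [he, Finset.sum_range_add, Finset.mul_sum]
            congr 1
            exact Finset.sum_congr rfl fun t _ => by rw [pow_add]; ring
          rw [Kp, hKc, hT]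
          exact h0 (m a + 1 - s) (by omega)
        obtain ⟨W, hW⟩ := KA_dvd z m l κ hκ a
        have hpw : u ^ (m a + 1) = u ^ s * u ^ (m a + 1 - s) := by
          rw [← pow_add]; congr 1; omega
        have hd := Pp_decomp z m l linf a
        set H : ℂ[X] := u ^ (m a + 1 - s) * (-(Gp z m a * W + Kp z m κ a * Rp z m l linf a))
          + T * Pp z m l linf with hH
        have hkey : Gp z m a - Kc * Pp z m l linf = u ^ s * H := by
          rw [hH]
          have e2 : Kc = Kp z m κ a - u ^ s * T := by rw [hsplit]; ring
          rw [e2]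
          calc Gp z m a - (Kp z m κ a - u ^ s * T) * Pp z m l linf
              = (Gp z m a - Kp z m κ a * Pp z m l linf) + u ^ s * (T * Pp z m l linf) := by
                ring
            _ = u ^ s * (u ^ (m a + 1 - s)
                  * (-(Gp z m a * W + Kp z m κ a * Rp z m l linf a)))
                + u ^ s * (T * Pp z m l linf) := by
                congr 1
                rw [← mul_assoc, ← hpw]
                calc Gp z m a - Kp z m κ a * Pp z m l linf
                    = Gp z m a * (1 - Kp z m κ a * Ap z m l a)
                      - u ^ (m a + 1) * (Kp z m κ a * Rp z m l linf a) := by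
                      rw [hd]; ring
                  _ = u ^ (m a + 1) * (-(Gp z m a * W + Kp z m κ a * Rp z m l linf a)) := by
                      have : (1 : ℂ[X]) - Kp z m κ a * Ap z m l a = -(u ^ (m a + 1) * W) := by
                        rw [← hW]; ring
                      rw [this]; ring
            _ = _ := by ring
        -- degree bound for H
        have hndKc : Kc.natDegree ≤ s - 1 := by
          refine natDegree_sum_le_of_forall_le _ _ fun t ht => ?_
          refine le_trans natDegree_mul_le ?_
          rw [natDegree_C, natDegree_pow, natDegree_X_sub_C, mul_one]
          have := mem_range.1 ht; omega
        have hndRHS : (Gp z m a - Kc * Pp z m l linf).natDegree ≤ M + s - 1 := by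
          refine le_trans (natDegree_sub_le _ _) (max_le ?_ ?_)
          · rw [Gp_natDegree]; omega
          · refine le_trans natDegree_mul_le ?_
            have := Pp_natDegree_le z m l linf hM
            omega
        have hndH : H.natDegree ≤ M - 1 := by
          by_cases hH0 : H = 0
          · rw [hH0, natDegree_zero]; omega
          · have hu0 : u ^ s ≠ 0 := pow_ne_zero _ (X_sub_C_ne_zero _)
            have := natDegree_mul (hu0) hH0
            rw [← hkey] at this
            rw [natDegree_pow, natDegree_X_sub_C, mul_one] at this
            omega
        have hdegH : H.degree < (M : ℕ) := by
          refine lt_of_le_of_lt degree_le_natDegree ?_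
          exact_mod_cast (by omega : H.natDegree < M)
        -- coefficient of H at M - 1
        have hcoH : H.coeff (M - 1) = κ a (q + r) * linf := by
          have h1 : (u ^ s * H).coeff (s + (M - 1)) = H.coeff (M - 1) :=
            coeff_pow_mul (z a) s (M - 1) H hndH
          rw [← hkey] at h1
          have h2 : (Gp z m a).coeff (s + (M - 1)) = 0 := by
            apply coeff_eq_zero_of_natDegree_lt
            rw [Gp_natDegree]; omega
          have h3 : (Kc * Pp z m l linf).coeff (s + (M - 1))
              = κ a (m a + (s - 1)) * (-linf) := by
            rw [hKc, Finset.sum_mul, finset_sum_coeff]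
            rw [Finset.sum_eq_single (s - 1)]
            · have e1 : s + (M - 1) = (s - 1) + M := by omega
              rw [mul_assoc, coeff_C_mul, e1,
                coeff_pow_mul (z a) (s - 1) M _ (Pp_natDegree_le z m l linf hM),
                Pp_coeff_top z m l linf hM]
            · intro t ht hts
              have ht' : t < s := mem_range.1 ht
              rw [mul_assoc, coeff_C_mul]
              have : (u ^ t * Pp z m l linf).coeff (s + (M - 1)) = 0 := by
                apply coeff_eq_zero_of_natDegree_lt
                refine lt_of_le_of_lt natDegree_mul_le ?_
                rw [natDegree_pow, natDegree_X_sub_C, mul_one]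
                have := Pp_natDegree_le z m l linf hM
                omega
              rw [this, mul_zero]
            · intro hs'
              exact absurd (mem_range.2 (by omega)) hs'
          rw [coeff_sub, h2, h3, zero_sub] at h1
          rw [← h1]
          have : m a + (s - 1) = q + r := by omega
          rw [this]; ring
        rw [core a a q r H hdegH ?_, hcoH]
        · rw [div_eq_iff (neg_ne_zero.2 hlinf)]; ring
        · intro i
          have he := congrArg (Polynomial.eval (ζ i)) hkey
          rw [eval_sub, eval_mul, hroot i, mul_zero, sub_zero, eval_mul, eval_pow,
            hu, eval_sub, eval_X, eval_C] at he
          have hDe : (Dp z m).eval (ζ i) = (ζ i - z a) ^ (m a + 1) * (Gp z m a).eval (ζ i) := by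
            rw [Dp_eq' z m a, eval_mul, eval_pow, eval_sub, eval_X, eval_C]
          rw [hDe]
          have e3 : (ζ i - z a) ^ (q + 1) * (ζ i - z a) ^ (r + 1)
              = (ζ i - z a) ^ (m a + 1) * (ζ i - z a) ^ s := by
            rw [← pow_add, ← pow_add]; congr 1; omega
          linear_combination (eval (ζ i) H) * e3 - (ζ i - z a) ^ (m a + 1) * he
    · -- distinct poles
      rw [if_neg hab]
      have hb : b ∈ univ.erase a := mem_erase.2 ⟨fun h => hab h.symm, mem_univ b⟩
      have hsum : (m a + 1) + ∑ c' ∈ univ.erase a, (m c' + 1) = M := by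
        rw [hM]; exact Finset.add_sum_erase univ (fun c => m c + 1) (mem_univ a)
      have hsum2 : (m b + 1) + ∑ c' ∈ (univ.erase a).erase b, (m c' + 1)
          = ∑ c' ∈ univ.erase a, (m c' + 1) :=
        Finset.add_sum_erase _ (fun c => m c + 1) hb
      set F : ℂ[X] := (X - C (z a)) ^ (m a - q) * ((X - C (z b)) ^ (m b - r)
        * ∏ c ∈ (univ.erase a).erase b, (X - C (z c)) ^ (m c + 1)) with hFdef
      have hGsplit : Gp z m a = (X - C (z b)) ^ (m b + 1)
          * ∏ c ∈ (univ.erase a).erase b, (X - C (z c)) ^ (m c + 1) :=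
        (Finset.mul_prod_erase _ _ hb).symm
      have hndprod : (∏ c ∈ (univ.erase a).erase b, (X - C (z c)) ^ (m c + 1)).natDegree
          = ∑ c' ∈ (univ.erase a).erase b, (m c' + 1) := by
        rw [natDegree_prod_of_monic _ _ fun c _ => (monic_X_sub_C _).pow _]
        exact Finset.sum_congr rfl fun c _ => by rw [natDegree_pow, natDegree_X_sub_C, mul_one]
      have hndF : F.natDegree ≤ (m a - q) + ((m b - r)
          + ∑ c' ∈ (univ.erase a).erase b, (m c' + 1)) := by
        refine le_trans natDegree_mul_le ?_
        rw [natDegree_pow, natDegree_X_sub_C, mul_one]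
        have h2 : ((X - C (z b)) ^ (m b - r)
            * ∏ c ∈ (univ.erase a).erase b, (X - C (z c)) ^ (m c + 1)).natDegree
            ≤ (m b - r) + ∑ c' ∈ (univ.erase a).erase b, (m c' + 1) := by
          refine le_trans natDegree_mul_le ?_
          rw [natDegree_pow, natDegree_X_sub_C, mul_one, hndprod]
        omega
      have hdeg : F.degree < (M : ℕ) := by
        refine lt_of_le_of_lt degree_le_natDegree ?_
        exact_mod_cast (by omega : F.natDegree < M)
      have hco : F.coeff (M - 1) = 0 := coeff_eq_zero_of_natDegree_lt (by omega)
      rw [core a b q r F hdeg ?_, hco, zero_div, neg_zero]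
      intro i
      have hDe : (Dp z m).eval (ζ i) = (ζ i - z a) ^ (m a + 1) * ((ζ i - z b) ^ (m b + 1)
          * (∏ c ∈ (univ.erase a).erase b, (X - C (z c)) ^ (m c + 1)).eval (ζ i)) := by
        rw [Dp_eq' z m a, hGsplit]
        simp [eval_mul, eval_pow]
      rw [hFdef, hDe]
      simp only [eval_mul, eval_pow, eval_sub, eval_X, eval_C]
      have e1 : (ζ i - z a) ^ (m a - q) * (ζ i - z a) ^ (q + 1)
          = (ζ i - z a) ^ (m a + 1) := by rw [← pow_add]; congr 1; omega
      have e2 : (ζ i - z b) ^ (m b - r) * (ζ i - z b) ^ (r + 1)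
          = (ζ i - z b) ^ (m b + 1) := by rw [← pow_add]; congr 1; omega
      linear_combination ((ζ i - z b) ^ (m b - r) * (ζ i - z b) ^ (r + 1)
          * eval (ζ i) (∏ c ∈ (univ.erase a).erase b, (X - C (z c)) ^ (m c + 1))) * e1
        + ((ζ i - z a) ^ (m a + 1)
          * eval (ζ i) (∏ c ∈ (univ.erase a).erase b, (X - C (z c)) ^ (m c + 1))) * e2
  -- expansion of the bilinear form
  have hexp : ∀ i, B (gamFun z m v (ζ i)) (gamFun z m v (ζ i))
      = ∑ a, ∑ q ∈ Finset.range (m a + 1), ∑ b, ∑ r ∈ Finset.range (m b + 1),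
          ((ζ i - z a) ^ (q + 1))⁻¹ * (((ζ i - z b) ^ (r + 1))⁻¹ * B (v a q) (v b r)) := by
    intro i
    have e1 : B (∑ a, ∑ p ∈ Finset.range (m a + 1), ((ζ i - z a) ^ (p + 1))⁻¹ • v a p)
        = ∑ a, ∑ p ∈ Finset.range (m a + 1), ((ζ i - z a) ^ (p + 1))⁻¹ • B (v a p) := by
      rw [map_sum]
      refine Finset.sum_congr rfl fun a _ => ?_
      rw [map_sum]
      exact Finset.sum_congr rfl fun p _ => map_smul B _ _
    rw [gamFun, e1, LinearMap.sum_apply]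
    refine Finset.sum_congr rfl fun a _ => ?_
    rw [LinearMap.sum_apply]
    refine Finset.sum_congr rfl fun q _ => ?_
    rw [LinearMap.smul_apply, smul_eq_mul]
    have e2 : ∀ x : V, B x (∑ b, ∑ r ∈ Finset.range (m b + 1),
          ((ζ i - z b) ^ (r + 1))⁻¹ • v b r)
        = ∑ b, ∑ r ∈ Finset.range (m b + 1), ((ζ i - z b) ^ (r + 1))⁻¹ * B x (v b r) := by
      intro x
      rw [map_sum (B x) _ Finset.univ]
      refine Finset.sum_congr rfl fun b _ => ?_
      rw [map_sum (B x) _ (Finset.range (m b + 1))]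
      refine Finset.sum_congr rfl fun r _ => ?_
      rw [map_smul, smul_eq_mul]
    rw [e2 (v a q), Finset.mul_sum]
    refine Finset.sum_congr rfl fun b _ => ?_
    rw [Finset.mul_sum]
  -- per-point expansion of the divided bilinear form
  have h1 : ∀ i, B (gamFun z m v (ζ i)) (gamFun z m v (ζ i))
        / (2 * deriv (fun w => chiFun z m l w - linf) (ζ i))
      = ∑ a, ∑ q ∈ Finset.range (m a + 1), ∑ b, ∑ r ∈ Finset.range (m b + 1),
          ((((ζ i - z a) ^ (q + 1))⁻¹ * ((ζ i - z b) ^ (r + 1))⁻¹)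
              / deriv (fun w => chiFun z m l w - linf) (ζ i))
            * ((1 / 2) * B (v a q) (v b r)) := by
    intro i
    rw [hexp i, Finset.sum_div]
    refine Finset.sum_congr rfl fun a _ => ?_
    rw [Finset.sum_div]
    refine Finset.sum_congr rfl fun q _ => ?_
    rw [Finset.sum_div]
    refine Finset.sum_congr rfl fun b _ => ?_
    rw [Finset.sum_div]
    refine Finset.sum_congr rfl fun r _ => ?_
    rw [div_eq_mul_inv, div_eq_mul_inv, mul_inv]
    ring
  have hswap : ∑ i, ∑ a, ∑ q ∈ Finset.range (m a + 1), ∑ b, ∑ r ∈ Finset.range (m b + 1),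
        ((((ζ i - z a) ^ (q + 1))⁻¹ * ((ζ i - z b) ^ (r + 1))⁻¹)
            / deriv (fun w => chiFun z m l w - linf) (ζ i))
          * ((1 / 2) * B (v a q) (v b r))
      = ∑ a, ∑ q ∈ Finset.range (m a + 1), ∑ b, ∑ r ∈ Finset.range (m b + 1), ∑ i,
        ((((ζ i - z a) ^ (q + 1))⁻¹ * ((ζ i - z b) ^ (r + 1))⁻¹)
            / deriv (fun w => chiFun z m l w - linf) (ζ i))
          * ((1 / 2) * B (v a q) (v b r)) := by
    rw [Finset.sum_comm]
    refine Finset.sum_congr rfl fun a _ => ?_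
    rw [Finset.sum_comm]
    refine Finset.sum_congr rfl fun q _ => ?_
    rw [Finset.sum_comm]
    refine Finset.sum_congr rfl fun b _ => ?_
    rw [Finset.sum_comm]
  have h2 : ∀ (a b : Fin n), ∀ q ∈ Finset.range (m a + 1), ∀ r ∈ Finset.range (m b + 1),
      (∑ i, ((((ζ i - z a) ^ (q + 1))⁻¹ * ((ζ i - z b) ^ (r + 1))⁻¹)
          / deriv (fun w => chiFun z m l w - linf) (ζ i))
        * ((1 / 2) * B (v a q) (v b r)))
      = -(if a = b then κ a (q + r) * ((1 / 2) * B (v a q) (v b r)) else 0) := by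
    intro a b q hq r hr
    rw [← Finset.sum_mul, MAIN a b q r (Nat.lt_succ_iff.1 (Finset.mem_range.1 hq))
      (Nat.lt_succ_iff.1 (Finset.mem_range.1 hr))]
    split_ifs
    · ring
    · ring
  have hcollapse : ∀ (g : Fin n → ℕ → ℂ) (a : Fin n),
      (∑ b, ∑ r ∈ Finset.range (m b + 1), if a = b then g b r else 0)
        = ∑ r ∈ Finset.range (m a + 1), g a r := by
    intro g a
    rw [Finset.sum_eq_single a]
    · simp
    · intro b _ hba
      exact Finset.sum_eq_zero fun r _ => if_neg fun h => hba h.symm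
    · intro h; exact absurd (Finset.mem_univ a) h
  calc ∑ a, ssInt B m κ v a 0
      = ∑ a, ∑ q ∈ Finset.range (m a + 1), ∑ r ∈ Finset.range (m a + 1),
          κ a (q + r) * ((1 / 2) * B (v a q) (v a r)) := by
        refine Finset.sum_congr rfl fun a _ => ?_
        rw [ssInt, Finset.mul_sum]
        refine Finset.sum_congr rfl fun q _ => ?_
        rw [Finset.mul_sum]
        refine Finset.sum_congr rfl fun r _ => ?_
        rw [if_pos (Nat.zero_le _), Nat.sub_zero]
        ring
    _ = ∑ a, ∑ q ∈ Finset.range (m a + 1), ∑ b, ∑ r ∈ Finset.range (m b + 1),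
          if a = b then κ a (q + r) * ((1 / 2) * B (v a q) (v b r)) else 0 := by
        refine Finset.sum_congr rfl fun a _ => ?_
        refine Finset.sum_congr rfl fun q _ => ?_
        exact (hcollapse (fun b r => κ a (q + r) * ((1 / 2) * B (v a q) (v b r))) a).symm
    _ = -∑ a, ∑ q ∈ Finset.range (m a + 1), ∑ b, ∑ r ∈ Finset.range (m b + 1),
          -(if a = b then κ a (q + r) * ((1 / 2) * B (v a q) (v b r)) else 0) := by
        simp only [Finset.sum_neg_distrib, neg_neg]
    _ = -∑ a, ∑ q ∈ Finset.range (m a + 1), ∑ b, ∑ r ∈ Finset.range (m b + 1), ∑ i,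
          ((((ζ i - z a) ^ (q + 1))⁻¹ * ((ζ i - z b) ^ (r + 1))⁻¹)
              / deriv (fun w => chiFun z m l w - linf) (ζ i))
            * ((1 / 2) * B (v a q) (v b r)) := by
        congr 1
        refine Finset.sum_congr rfl fun a _ => ?_
        refine Finset.sum_congr rfl fun q hq => ?_
        refine Finset.sum_congr rfl fun b _ => ?_
        refine Finset.sum_congr rfl fun r hr => ?_
        exact (h2 a b q hq r hr).symm
    _ = -∑ i, B (gamFun z m v (ζ i)) (gamFun z m v (ζ i))
          / (2 * deriv (fun w => chiFun z m l w - linf) (ζ i)) := by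
        rw [← hswap]
        congr 1
        exact (Finset.sum_congr rfl fun i _ => (h1 i)).symm

end MainTheorem
end
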